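/- arXiv:1010.6261 — 3 statements merged into one kernel-verified Lean document; each statement's English description precedes it below -/
import Mathlib

section
/- For n ≥ 4 and 2 ≤ k ≤ n − 2, the number of minimal permutations of length n with ascent sequence (k, n−k) equals binom(n, k) − n, i.e., F_{k,n−k}(n) = binom(n, k) − n. -/
/-- `i` (1-based) is a descent of the word `w`, i.e. `1 ≤ i ≤ w.length - 1` and
`w_i > w_{i+1}` (1-based entries). -/
def DescentAt (w : List ℕ) (i : ℕ) : Prop :=
  1 ≤ i ∧ i + 1 ≤ w.length ∧ w.getD i 0 < w.getD (i - 1) 0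

instance (w : List ℕ) (i : ℕ) : Decidable (DescentAt w i) :=
  inferInstanceAs (Decidable (_ ∧ _ ∧ _))

/-- `i` (1-based) is an ascent of the word `w`. -/
def AscentAt (w : List ℕ) (i : ℕ) : Prop :=
  1 ≤ i ∧ i + 1 ≤ w.length ∧ w.getD (i - 1) 0 < w.getD i 0

instance (w : List ℕ) (i : ℕ) : Decidable (AscentAt w i) :=
  inferInstanceAs (Decidable (_ ∧ _ ∧ _))

/-- The set of descent positions of `w`. -/
def descents (w : List ℕ) : Finset ℕ :=
  (Finset.range w.length).filter (fun i => DescentAt w i)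

/-- `w` is a permutation of `[n] = {1,…,n}`, written as a word. -/
def IsPermWord (n : ℕ) (w : List ℕ) : Prop :=
  w.length = n ∧ w.Nodup ∧ ∀ x ∈ w, 1 ≤ x ∧ x ≤ n

/-- Two words of distinct entries are in the same relative order. -/
def SameRelOrder (u v : List ℕ) : Prop :=
  u.length = v.length ∧
    ∀ p q, p < u.length → q < u.length →
      (u.getD p 0 < u.getD q 0 ↔ v.getD p 0 < v.getD q 0)

/-- `σ ≺ w`: the word `w` contains the pattern `σ`, i.e. `w` has a subsequence
in the same relative order as `σ`. -/
def ContainsPattern (σ w : List ℕ) : Prop :=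
  ∃ s : List ℕ, s.Sublist w ∧ SameRelOrder s σ

/-- `w` is a minimal permutation with `d` descents: it has exactly `d` descents and
no strictly shorter permutation with exactly `d` descents occurs in it as a pattern. -/
def MinimalPerm (d : ℕ) (w : List ℕ) : Prop :=
  (descents w).card = d ∧
    ∀ (m : ℕ) (σ : List ℕ), IsPermWord m σ → m < w.length →
      (descents σ).card = d → ¬ ContainsPattern σ w

/-- `w` is a minimal permutation (with its own number of descents). -/
def IsMinimal (w : List ℕ) : Prop :=
  MinimalPerm (descents w).card w

/-- The set `𝓕_d(n)` of minimal permutations of length `n` with `d` descents. -/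
def minimalPerms (d n : ℕ) : Set (List ℕ) :=
  {w | IsPermWord n w ∧ MinimalPerm d w}

/-- `f_d(n) = |𝓕_d(n)|`. -/
noncomputable def fCount (d n : ℕ) : ℕ :=
  (minimalPerms d n).ncard

/-- `w` has ascent sequence `a`: `w` decomposes into maximal strictly decreasing
runs whose lengths, from left to right, are the entries of `a` (maximality is
expressed by the junctions between consecutive runs being ascents). -/
def HasAscentSeq (w a : List ℕ) : Prop :=
  ∃ bs : List (List ℕ), bs.flatten = w ∧ bs.map List.length = a ∧
    (∀ b ∈ bs, b ≠ [] ∧ List.Chain' (fun x y => x > y) b) ∧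
    List.Chain' (fun b c => ∃ x ∈ b.getLast?, ∃ y ∈ c.head?, x < y) bs

/-- The set `𝓕_{a₁,…,a_k}(n)` of minimal permutations of length `n` with
ascent sequence `a = (a₁,…,a_k)`. -/
def minimalPermsAsc (n : ℕ) (a : List ℕ) : Set (List ℕ) :=
  {w | IsPermWord n w ∧ IsMinimal w ∧ HasAscentSeq w a}

/-- `F_{a₁,…,a_k}(n) = |𝓕_{a₁,…,a_k}(n)|`. -/
noncomputable def FCount (n : ℕ) (a : List ℕ) : ℕ :=
  (minimalPermsAsc n a).ncard

/-- A standard filling of a given cell set by `1,…,N`: zero off the cells,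
a bijection from the cells onto `{1,…,N}`, strictly increasing along rows
(second coordinate) and columns (first coordinate). -/
def IsTableauOn (cell : ℕ → ℕ → Prop) (N : ℕ) (T : ℕ → ℕ → ℕ) : Prop :=
  (∀ r c, ¬ cell r c → T r c = 0) ∧
  (∀ r c, cell r c → 1 ≤ T r c ∧ T r c ≤ N) ∧
  (∀ r c r' c', cell r c → cell r' c' → T r c = T r' c' → r = r' ∧ c = c') ∧
  (∀ v, 1 ≤ v → v ≤ N → ∃ r c, cell r c ∧ T r c = v) ∧
  (∀ r c, cell r c → cell r (c + 1) → T r c < T r (c + 1)) ∧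
  (∀ r c, cell r c → cell (r + 1) c → T r c < T (r + 1) c)

/-- The cells of the skew shape `λ/μ` (rows indexed from `0` downward,
columns from `0` rightward): row `r` contains columns `μ_r ≤ c < λ_r`. -/
def skewCell (l m : List ℕ) (r c : ℕ) : Prop :=
  r < l.length ∧ m.getD r 0 ≤ c ∧ c < l.getD r 0

/-- A standard skew Young tableau of shape `λ/μ`. -/
def IsSkewSYT (l m : List ℕ) (T : ℕ → ℕ → ℕ) : Prop :=
  IsTableauOn (skewCell l m) (l.sum - m.sum) T

/-- `f^{λ/μ}`, the number of standard skew Young tableaux of shape `λ/μ`. -/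
noncomputable def skewSYTCount (l m : List ℕ) : ℕ :=
  Nat.card {T : ℕ → ℕ → ℕ // IsSkewSYT l m T}

/-- The row index of the top cell of column `c` in the 2-regular skew shape
with column lengths `a₁,…,a_k` (columns normalized so that the last column
starts in row `0`; consecutive columns overlap in exactly two rows). -/
def colTop (a : List ℕ) (c : ℕ) : ℕ :=
  (a.drop (c + 1)).sum - 2 * (a.length - 1 - c)

/-- The cells of the 2-regular skew shape with column lengths `a₁,…,a_k`:
column `c` occupies the `a_c` rows starting at `colTop a c`, so that any two
consecutive columns overlap in exactly two rows. -/
def twoRegCell (a : List ℕ) (r c : ℕ) : Prop :=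
  c < a.length ∧ colTop a c ≤ r ∧ r < colTop a c + a.getD c 0

/-- A 2-regular skew tableau with column lengths `a₁,…,a_k`: a standard filling
of the 2-regular skew shape by `1,…,a₁+⋯+a_k`. -/
def Is2RegularTableau (a : List ℕ) (T : ℕ → ℕ → ℕ) : Prop :=
  IsTableauOn (twoRegCell a) a.sum T

/-- `𝓜_{2n+1,2i}`: minimal permutations of length `2n+1` with `n+1` descents whose
unique pair of consecutive descents is `(2i-1, 2i)`. -/
def Mset (n i : ℕ) : Set (List ℕ) :=
  {w | IsPermWord (2 * n + 1) w ∧ MinimalPerm (n + 1) w ∧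
    DescentAt w (2 * i - 1) ∧ DescentAt w (2 * i) ∧
    ∀ j, DescentAt w j → DescentAt w (j + 1) → j = 2 * i - 1}

/-- Elementary Knuth transformations on words of distinct integers. -/
inductive KnuthStep : List ℕ → List ℕ → Prop
  | k1 (u v : List ℕ) (x y z : ℕ) (hxy : x < y) (hyz : y < z) :
      KnuthStep (u ++ [x, z, y] ++ v) (u ++ [z, x, y] ++ v)
  | k2 (u v : List ℕ) (x y z : ℕ) (hxy : x < y) (hyz : y < z) :
      KnuthStep (u ++ [y, x, z] ++ v) (u ++ [y, z, x] ++ v)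

/-- Knuth equivalence of words. -/
def KnuthEquiv : List ℕ → List ℕ → Prop := Relation.EqvGen KnuthStep
namespace AuxMin

open List Finset

instance : IsAntisymm ℕ (· > ·) := ⟨fun a b h1 h2 => le_antisymm h2.le h1.le⟩
instance : IsTrans ℕ (· > ·) := ⟨fun _ _ _ h1 h2 => lt_trans h2 h1⟩

/-- the strictly decreasing enumeration of a finset -/
def dList (A : Finset ℕ) : List ℕ := (A.sort (· ≤ ·)).reverse

lemma dList_pairwise (A : Finset ℕ) : (dList A).Pairwise (· > ·) := by
  rw [dList, List.pairwise_reverse]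
  exact A.sortedLT_sort.pairwise

lemma dList_nodup (A : Finset ℕ) : (dList A).Nodup :=
  (dList_pairwise A).imp fun h => ne_of_gt h

lemma dList_length (A : Finset ℕ) : (dList A).length = A.card := by
  simp [dList]

lemma mem_dList {A : Finset ℕ} {x : ℕ} : x ∈ dList A ↔ x ∈ A := by
  simp [dList]

lemma dList_toFinset (A : Finset ℕ) : (dList A).toFinset = A := by
  ext x; simp [mem_dList]

lemma dList_chain' (A : Finset ℕ) : List.Chain' (· > ·) (dList A) :=
  (dList_pairwise A).isChain

lemma dList_ne_nil {A : Finset ℕ} (h : A.Nonempty) : dList A ≠ [] := by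
  intro hc
  have := dList_length A
  rw [hc] at this
  simp only [List.length_nil] at this
  exact absurd this.symm ((Finset.card_pos.mpr h)).ne'

lemma eq_dList {l : List ℕ} {A : Finset ℕ} (hp : l.Pairwise (· > ·))
    (hA : l.toFinset = A) : l = dList A := by
  have hnd : l.Nodup := hp.imp fun h => ne_of_gt h
  have hperm : l ~ dList A :=
    List.perm_of_nodup_nodup_toFinset_eq hnd (dList_nodup A)
      (by rw [hA, dList_toFinset])
  exact List.Perm.eq_of_pairwise (fun a b _ _ h1 h2 => absurd (lt_trans h1 h2) (lt_irrefl _)) hp (dList_pairwise A) hperm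

lemma dList_sublist {A B : Finset ℕ} (h : A ⊆ B) : (dList A).Sublist (dList B) := by
  set f := (B.sort (· ≤ ·)).filter (fun x => decide (x ∈ A)) with hf
  have hsub : f.Sublist (B.sort (· ≤ ·)) := List.filter_sublist
  have hpw : f.Pairwise (· < ·) := (B.sortedLT_sort.pairwise).sublist hsub
  have hpw' : f.reverse.Pairwise (· > ·) := List.pairwise_reverse.mpr hpw
  have htf : f.reverse.toFinset = A := by
    ext x
    simp only [List.toFinset_reverse, List.mem_toFinset, hf, List.mem_filter,
      Finset.mem_sort, decide_eq_true_eq]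
    exact ⟨fun hx => hx.2, fun hx => ⟨h hx, hx⟩⟩
  have : f.reverse = dList A := eq_dList hpw' htf
  rw [← this, dList]
  exact hsub.reverse

lemma head_le_of_pairwise {l : List ℕ} (hp : l.Pairwise (· > ·)) {y : ℕ}
    (hy : y ∈ l.head?) : ∀ u ∈ l, u ≤ y := by
  cases l with
  | nil => simp at hy
  | cons a t =>
    simp only [List.head?_cons, Option.mem_def, Option.some.injEq] at hy
    subst hy
    intro u hu
    rcases List.mem_cons.mp hu with h | h
    · exact h.le
    · exact ((List.pairwise_cons.mp hp).1 u h).le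

lemma getLast_le_of_pairwise {l : List ℕ} (hp : l.Pairwise (· > ·)) {x : ℕ}
    (hx : x ∈ l.getLast?) : ∀ u ∈ l, x ≤ u := by
  rw [← List.head?_reverse] at hx
  have hp' : l.reverse.Pairwise (· < ·) := List.pairwise_reverse.mpr hp
  cases hl : l.reverse with
  | nil => rw [hl] at hx; simp at hx
  | cons a t =>
    rw [hl] at hx hp'
    simp only [List.head?_cons, Option.mem_def, Option.some.injEq] at hx
    subst hx
    intro u hu
    have hu' : u ∈ l.reverse := List.mem_reverse.mpr hu
    rw [hl] at hu'
    rcases List.mem_cons.mp hu' with h | h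
    · exact h.ge
    · exact ((List.pairwise_cons.mp hp').1 u h).le

lemma getD_lt_getD_iff {l : List ℕ} (hp : l.Pairwise (· > ·)) {p q : ℕ}
    (hpl : p < l.length) (hql : q < l.length) :
    (l.getD p 0 < l.getD q 0 ↔ q < p) := by
  rw [List.getD_eq_getElem l 0 hpl, List.getD_eq_getElem l 0 hql]
  have key : ∀ i j (hi : i < l.length) (hj : j < l.length), i < j → l[j] < l[i] :=
    fun i j hi hj hij => List.pairwise_iff_getElem.mp hp i j hi hj hij
  rcases lt_trichotomy p q with h | h | h
  · constructor
    · intro hc; exact absurd (key p q hpl hql h) (by omega)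
    · omega
  · subst h; simp
  · exact ⟨fun _ => h, fun _ => key q p hql hpl h⟩

lemma chain'_gt_iff_getD {l : List ℕ} :
    List.Chain' (· > ·) l ↔ ∀ i, i + 1 < l.length → l.getD (i + 1) 0 < l.getD i 0 := by
  rw [List.Chain', List.isChain_iff_getElem]
  constructor
  · intro h i hi
    have h1 : i < l.length - 1 := by omega
    have := h i (by omega)
    rw [List.getD_eq_getElem l 0 (by omega : i < l.length),
      List.getD_eq_getElem l 0 hi]
    simpa [List.get_eq_getElem] using this
  · intro h i hi
    have hi' : i + 1 < l.length := by omega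
    have := h i hi'
    rw [List.getD_eq_getElem l 0 (by omega : i < l.length),
      List.getD_eq_getElem l 0 hi'] at this
    simpa [List.get_eq_getElem] using this

end AuxMin
namespace AuxMin
open List Finset

lemma mem_descents {w : List ℕ} {i : ℕ} : i ∈ descents w ↔ DescentAt w i := by
  constructor
  · rintro h; exact (Finset.mem_filter.mp h).2
  · intro h
    refine Finset.mem_filter.mpr ⟨Finset.mem_range.mpr ?_, h⟩
    have := h.2.1; omega

lemma descents_subset (w : List ℕ) : descents w ⊆ Finset.Icc 1 (w.length - 1) := by
  intro i hi
  have h := mem_descents.mp hi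
  have h1 := h.1; have h2 := h.2.1
  rw [Finset.mem_Icc]; omega

/-- descents of a two-block word with strictly decreasing blocks and an ascent
at the junction -/
lemma descents_append {b1 b2 : List ℕ} (h1 : List.Chain' (· > ·) b1)
    (h2 : List.Chain' (· > ·) b2) (hb1 : b1 ≠ []) (hb2 : b2 ≠ [])
    (hj : ∀ x ∈ b1.getLast?, ∀ y ∈ b2.head?, x < y) :
    descents (b1 ++ b2) = (Finset.Icc 1 (b1.length + b2.length - 1)).erase b1.length := by
  set k := b1.length with hk
  set m := b2.length with hm
  have hk1 : 1 ≤ k := List.length_pos_iff.mpr hb1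
  have hm1 : 1 ≤ m := List.length_pos_iff.mpr hb2
  have hlen : (b1 ++ b2).length = k + m := by simp [hk, hm]
  have key : ∀ i, 1 ≤ i → i + 1 ≤ k + m →
      ((b1 ++ b2).getD i 0 < (b1 ++ b2).getD (i - 1) 0 ↔ i ≠ k) := by
    intro i hi1 hi2
    rcases lt_trichotomy i k with hik | hik | hik
    · rw [List.getD_append _ _ _ _ (by omega : i < b1.length),
        List.getD_append _ _ _ _ (by omega : i - 1 < b1.length)]
      have := chain'_gt_iff_getD.mp h1 (i - 1) (by omega)
      rw [(by omega : i - 1 + 1 = i)] at this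
      exact ⟨fun _ => by omega, fun _ => this⟩
    · obtain ⟨y, t, hb2e⟩ := List.exists_cons_of_ne_nil hb2
      have hx := List.getLast?_eq_getLast_of_ne_nil hb1
      have hlt : b1.getLast hb1 < y := by
        apply hj _ (by rw [hx]; rfl) y
        rw [hb2e]; rfl
      rw [hik, List.getD_append_right _ _ _ _ (by omega : b1.length ≤ k), hk, Nat.sub_self,
        List.getD_append _ _ _ _ (by omega : k - 1 < b1.length)]
      have hgl : b1.getD (k - 1) 0 = b1.getLast hb1 := by
        rw [List.getLast_eq_getElem, List.getD_eq_getElem b1 0 (by omega : k - 1 < b1.length)]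
      have hhd : b2.getD 0 0 = y := by rw [hb2e]; rfl
      rw [hgl, hhd]
      constructor
      · intro hc; exact absurd hc (by omega)
      · intro hc; exact absurd rfl hc
    · rw [List.getD_append_right _ _ _ _ (by omega : b1.length ≤ i),
        List.getD_append_right _ _ _ _ (by omega : b1.length ≤ i - 1)]
      rw [← hk]
      have := chain'_gt_iff_getD.mp h2 (i - 1 - k) (by omega)
      rw [(by omega : i - 1 - k + 1 = i - k)] at this
      exact ⟨fun _ => by omega, fun _ => this⟩
  ext i
  rw [mem_descents, Finset.mem_erase, Finset.mem_Icc]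
  constructor
  · rintro ⟨hi1, hi2, hi3⟩
    rw [hlen] at hi2
    have := (key i hi1 hi2).mp hi3
    exact ⟨this, hi1, by omega⟩
  · rintro ⟨hne, hi1, hi2⟩
    have hi2' : i + 1 ≤ k + m := by omega
    exact ⟨hi1, by rw [hlen]; omega, (key i hi1 hi2').mpr hne⟩

/-- descents of a strictly decreasing word -/
lemma descents_chain' {w : List ℕ} (h : List.Chain' (· > ·) w) :
    descents w = Finset.Icc 1 (w.length - 1) := by
  apply Finset.Subset.antisymm (descents_subset w)
  intro i hi
  rw [Finset.mem_Icc] at hi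
  rw [mem_descents]
  have hlen : 1 ≤ w.length := by omega
  refine ⟨hi.1, by omega, ?_⟩
  have := chain'_gt_iff_getD.mp h (i - 1) (by omega)
  rwa [(by omega : i - 1 + 1 = i)] at this

lemma card_descents_append {b1 b2 : List ℕ} (h1 : List.Chain' (· > ·) b1)
    (h2 : List.Chain' (· > ·) b2) (hb1 : b1 ≠ []) (hb2 : b2 ≠ [])
    (hj : ∀ x ∈ b1.getLast?, ∀ y ∈ b2.head?, x < y) :
    (descents (b1 ++ b2)).card = b1.length + b2.length - 2 := by
  rw [descents_append h1 h2 hb1 hb2 hj]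
  have hk1 : 1 ≤ b1.length := List.length_pos_iff.mpr hb1
  have hm1 : 1 ≤ b2.length := List.length_pos_iff.mpr hb2
  rw [Finset.card_erase_of_mem (by rw [Finset.mem_Icc]; omega), Nat.card_Icc]
  omega

lemma card_descents_chain' {w : List ℕ} (h : List.Chain' (· > ·) w) :
    (descents w).card = w.length - 1 := by
  rw [descents_chain' h, Nat.card_Icc]; omega

/-- a word whose descent count is maximal is strictly decreasing -/
lemma pairwise_of_descents_card {σ : List ℕ} (hd : (descents σ).card = σ.length - 1) :
    σ.Pairwise (· > ·) := by
  rcases Nat.eq_zero_or_pos σ.length with h0 | h0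
  · rw [List.length_eq_zero_iff.mp h0]; exact List.Pairwise.nil
  have hsub := descents_subset σ
  have hcard : (Finset.Icc 1 (σ.length - 1)).card ≤ (descents σ).card := by
    rw [hd, Nat.card_Icc]; omega
  have heq : descents σ = Finset.Icc 1 (σ.length - 1) :=
    Finset.eq_of_subset_of_card_le hsub hcard
  apply List.isChain_iff_pairwise.mp
  refine chain'_gt_iff_getD.mpr ?_
  intro i hi
  have hmem : i + 1 ∈ descents σ := by rw [heq, Finset.mem_Icc]; omega
  have hd2 := (mem_descents.mp hmem).2.2
  simpa using hd2

end AuxMin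
namespace AuxMin
open List Finset

lemma sameRelOrder_of_decreasing {s σ : List ℕ} (hs : s.Pairwise (· > ·))
    (hσ : σ.Pairwise (· > ·)) (hl : s.length = σ.length) : SameRelOrder s σ := by
  refine ⟨hl, fun p q hp hq => ?_⟩
  rw [getD_lt_getD_iff hs hp hq, getD_lt_getD_iff hσ (hl ▸ hp) (hl ▸ hq)]

lemma pairwise_of_sameRelOrder {s σ : List ℕ} (h : SameRelOrder s σ)
    (hσ : σ.Pairwise (· > ·)) : s.Pairwise (· > ·) := by
  rw [List.pairwise_iff_getElem]
  intro i j hi hj hij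
  have hiff := h.2 j i hj hi
  rw [getD_lt_getD_iff hσ (h.1 ▸ hj) (h.1 ▸ hi)] at hiff
  have := hiff.mpr hij
  rwa [List.getD_eq_getElem s 0 hj, List.getD_eq_getElem s 0 hi] at this

/-- the two-block word associated to a set `A` -/
def wk (n : ℕ) (A : Finset ℕ) : List ℕ := dList A ++ dList (Finset.Icc 1 n \ A)

/-- the decreasing word of length m -/
def decWord (m : ℕ) : List ℕ := dList (Finset.Icc 1 m)

lemma decWord_isPermWord (m : ℕ) : IsPermWord m (decWord m) := by
  refine ⟨by rw [decWord, dList_length, Nat.card_Icc]; omega, dList_nodup _, fun x hx => ?_⟩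
  rw [decWord, mem_dList, Finset.mem_Icc] at hx
  exact hx

lemma decWord_card_descents (m : ℕ) (hm : 1 ≤ m) : (descents (decWord m)).card = m - 1 := by
  rw [decWord, card_descents_chain' (dList_chain' _), dList_length, Nat.card_Icc]; omega

/-- If `A` is "bad", `wk n A` contains a decreasing subsequence of length `n-1`. -/
lemma sub_of_bad {n k : ℕ} {A : Finset ℕ} (hA : A ⊆ Finset.Icc 1 n) (hcard : A.card = k)
    (hn : 4 ≤ n) (hk1 : 2 ≤ k) (hk2 : k ≤ n - 2)
    (hbad : A ⊆ Finset.Icc (n - k) n ∨ Finset.Icc (n - k + 2) n ⊆ A) :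
    ∃ s : List ℕ, s.Sublist (wk n A) ∧ s.length = n - 1 ∧ s.Pairwise (· > ·) := by
  rcases hbad with hbad | hbad
  · refine ⟨dList A ++ dList (Finset.Icc 1 (n - k - 1)), ?_, ?_, ?_⟩
    · apply List.Sublist.append (List.Sublist.refl _)
      apply dList_sublist
      intro x hx
      rw [Finset.mem_Icc] at hx
      rw [Finset.mem_sdiff, Finset.mem_Icc]
      refine ⟨⟨hx.1, by omega⟩, fun hxA => ?_⟩
      have := hbad hxA
      rw [Finset.mem_Icc] at this
      omega
    · rw [List.length_append, dList_length, dList_length, hcard, Nat.card_Icc]; omega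
    · rw [List.pairwise_append]
      refine ⟨dList_pairwise _, dList_pairwise _, fun x hx y hy => ?_⟩
      rw [mem_dList] at hx hy
      have h1 := hbad hx
      rw [Finset.mem_Icc] at h1 hy
      omega
  · refine ⟨dList (Finset.Icc (n - k + 2) n) ++ dList (Finset.Icc 1 n \ A), ?_, ?_, ?_⟩
    · exact List.Sublist.append (dList_sublist hbad) (List.Sublist.refl _)
    · rw [List.length_append, dList_length, dList_length, Nat.card_Icc,
        Finset.card_sdiff_of_subset hA, Nat.card_Icc, hcard]
      omega
    · rw [List.pairwise_append]
      refine ⟨dList_pairwise _, dList_pairwise _, fun x hx y hy => ?_⟩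
      rw [mem_dList, Finset.mem_Icc] at hx
      rw [mem_dList, Finset.mem_sdiff, Finset.mem_Icc] at hy
      have : ¬ (n - k + 2 ≤ y ∧ y ≤ n) := fun hc => hy.2 (hbad (Finset.mem_Icc.mpr hc))
      omega

/-- If `wk n A` contains a decreasing subsequence of length `n-1`, `A` is "bad". -/
lemma bad_of_sub {n k : ℕ} {A : Finset ℕ} (hA : A ⊆ Finset.Icc 1 n) (hcard : A.card = k)
    (hn : 4 ≤ n) (hk1 : 2 ≤ k) (hk2 : k ≤ n - 2)
    {s : List ℕ} (hs : s.Sublist (wk n A)) (hlen : s.length = n - 1)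
    (hchain : s.Pairwise (· > ·)) :
    A ⊆ Finset.Icc (n - k) n ∨ Finset.Icc (n - k + 2) n ⊆ A := by
  rw [wk, List.sublist_append_iff] at hs
  obtain ⟨s1, s2, hse, hs1, hs2⟩ := hs
  rw [hse] at hchain hlen
  rw [List.pairwise_append] at hchain
  obtain ⟨hp1, hp2, hcross⟩ := hchain
  rw [List.length_append] at hlen
  have hl1 : s1.length ≤ k := by
    have := hs1.length_le; rwa [dList_length, hcard] at this
  have hl2 : s2.length ≤ n - k := by
    have := hs2.length_le
    rwa [dList_length, Finset.card_sdiff_of_subset hA, Nat.card_Icc, hcard,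
      (by omega : n + 1 - 1 = n)] at this
  have hnd1 : s1.Nodup := hp1.imp fun h => ne_of_gt h
  have hnd2 : s2.Nodup := hp2.imp fun h => ne_of_gt h
  have hsub1 : s1.toFinset ⊆ A := by
    intro x hx
    rw [List.mem_toFinset] at hx
    exact mem_dList.mp (hs1.subset hx)
  have hsub2 : s2.toFinset ⊆ Finset.Icc 1 n \ A := by
    intro x hx
    rw [List.mem_toFinset] at hx
    exact mem_dList.mp (hs2.subset hx)
  have hc1 : s1.toFinset.card = s1.length := List.toFinset_card_of_nodup hnd1
  have hc2 : s2.toFinset.card = s2.length := List.toFinset_card_of_nodup hnd2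
  rcases (by omega : s1.length = k ∨ s2.length = n - k) with hcase | hcase
  · -- s1 exhausts A; every element of A exceeds the n-k-1 elements of s2
    left
    have hS1 : s1.toFinset = A :=
      Finset.eq_of_subset_of_card_le hsub1 (by omega)
    intro a ha
    rw [Finset.mem_Icc]
    have haIcc := Finset.mem_Icc.mp (hA ha)
    have hs2sub : s2.toFinset ⊆ Finset.Icc 1 (a - 1) := by
      intro y hy
      have hy' := hsub2 hy
      rw [Finset.mem_sdiff, Finset.mem_Icc] at hy'
      rw [List.mem_toFinset] at hy
      have : a > y := hcross a (by rw [← List.mem_toFinset, hS1]; exact ha) y hy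
      rw [Finset.mem_Icc]
      omega
    have := Finset.card_le_card hs2sub
    rw [hc2, Nat.card_Icc] at this
    omega
  · -- s2 exhausts the complement
    right
    have hS2 : s2.toFinset = Finset.Icc 1 n \ A := by
      apply Finset.eq_of_subset_of_card_le hsub2
      rw [Finset.card_sdiff_of_subset hA, Nat.card_Icc, hcard, hc2]
      omega
    intro z hz
    rw [Finset.mem_Icc] at hz
    by_contra hzA
    have hzs2 : z ∈ s2 := by
      rw [← List.mem_toFinset, hS2, Finset.mem_sdiff, Finset.mem_Icc]
      exact ⟨⟨by omega, hz.2⟩, hzA⟩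
    have hS1sub : s1.toFinset ⊆ Finset.Icc (z + 1) n := by
      intro x hx
      rw [List.mem_toFinset] at hx
      have hgt : x > z := hcross x hx z hzs2
      have hxn := Finset.mem_Icc.mp (hA (hsub1 (List.mem_toFinset.mpr hx)))
      rw [Finset.mem_Icc]
      omega
    have := Finset.card_le_card hS1sub
    rw [hc1, Nat.card_Icc] at this
    omega

/-- junction of the two blocks of `wk n A` is an ascent when `A` is not bad -/
lemma junction_ascent {n k : ℕ} {A : Finset ℕ} (hA : A ⊆ Finset.Icc 1 n) (hcard : A.card = k)
    (hn : 4 ≤ n) (hk1 : 2 ≤ k) (hk2 : k ≤ n - 2)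
    (hnb : ¬ A ⊆ Finset.Icc (n - k) n) :
    ∀ x ∈ (dList A).getLast?, ∀ y ∈ (dList (Finset.Icc 1 n \ A)).head?, x < y := by
  intro x hx y hy
  have hxA : x ∈ A := mem_dList.mp (List.mem_of_mem_getLast? hx)
  have hxmin : ∀ u ∈ A, x ≤ u := fun u hu =>
    getLast_le_of_pairwise (dList_pairwise A) hx u (mem_dList.mpr hu)
  have hyC : y ∈ Finset.Icc 1 n \ A := mem_dList.mp (List.mem_of_mem_head? hy)
  have hymax : ∀ u ∈ Finset.Icc 1 n \ A, u ≤ y := fun u hu =>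
    head_le_of_pairwise (dList_pairwise _) hy u (mem_dList.mpr hu)
  by_contra hc
  push_neg at hc
  have hxy : y < x := by
    rcases lt_or_eq_of_le hc with h | h
    · exact h
    · exfalso; exact (Finset.mem_sdiff.mp hyC).2 (h ▸ hxA)
  have hsub : Finset.Icc x n ⊆ A := by
    intro z hz
    rw [Finset.mem_Icc] at hz
    by_contra hzA
    have hz' : z ∈ Finset.Icc 1 n \ A := by
      rw [Finset.mem_sdiff, Finset.mem_Icc]
      have hx1 : 1 ≤ x := (Finset.mem_Icc.mp (hA hxA)).1
      exact ⟨⟨by omega, hz.2⟩, hzA⟩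
    have := hymax z hz'
    omega
  have hcIcc := Finset.card_le_card hsub
  rw [Nat.card_Icc, hcard] at hcIcc
  have hxn : x ≤ n := (Finset.mem_Icc.mp (hA hxA)).2
  apply hnb
  intro a ha
  rw [Finset.mem_Icc]
  have h1 := hxmin a ha
  have h2 := (Finset.mem_Icc.mp (hA ha)).2
  omega

end AuxMin
namespace AuxMin
open List Finset

def Bad (n k : ℕ) (A : Finset ℕ) : Prop :=
  A ⊆ Finset.Icc (n - k) n ∨ Finset.Icc (n - k + 2) n ⊆ A

instance (n k : ℕ) (A : Finset ℕ) : Decidable (Bad n k A) := by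
  unfold Bad; infer_instance

def goodF (n k : ℕ) : Finset (Finset ℕ) :=
  ((Finset.Icc 1 n).powersetCard k).filter (fun A => ¬ Bad n k A)

lemma mem_goodF {n k : ℕ} {A : Finset ℕ} :
    A ∈ goodF n k ↔ A ⊆ Finset.Icc 1 n ∧ A.card = k ∧ ¬ Bad n k A := by
  rw [goodF, Finset.mem_filter, Finset.mem_powersetCard]
  tauto

section Main
variable {n k : ℕ} (hn : 4 ≤ n) (hk1 : 2 ≤ k) (hk2 : k ≤ n - 2)

lemma compl_card {A : Finset ℕ} (hA : A ⊆ Finset.Icc 1 n) (hcard : A.card = k) :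
    (Finset.Icc 1 n \ A).card = n - k := by
  rw [Finset.card_sdiff_of_subset hA, Nat.card_Icc, hcard]; omega

include hk1 in
lemma A_nonempty {A : Finset ℕ} (hcard : A.card = k) : A.Nonempty :=
  Finset.card_pos.mp (by omega)

include hn hk1 hk2 in
lemma wk_isPermWord {A : Finset ℕ} (hA : A ⊆ Finset.Icc 1 n) (hcard : A.card = k) :
    IsPermWord n (wk n A) := by
  refine ⟨?_, ?_, ?_⟩
  · rw [wk, List.length_append, dList_length, dList_length, hcard,
      compl_card hA hcard]
    omega
  · rw [wk, List.nodup_append]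
    refine ⟨dList_nodup _, dList_nodup _, fun x hx y hx' => ?_⟩
    rw [mem_dList] at hx hx'
    exact fun h => (Finset.mem_sdiff.mp hx').2 (h ▸ hx)
  · intro x hx
    rw [wk, List.mem_append, mem_dList, mem_dList] at hx
    rcases hx with hx | hx
    · exact Finset.mem_Icc.mp (hA hx)
    · exact Finset.mem_Icc.mp (Finset.mem_sdiff.mp hx).1
include hn hk1 hk2 in
lemma wk_card_descents {A : Finset ℕ} (hA : A ⊆ Finset.Icc 1 n) (hcard : A.card = k)
    (hnb : ¬ A ⊆ Finset.Icc (n - k) n) : (descents (wk n A)).card = n - 2 := by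
  rw [wk, card_descents_append (dList_chain' _) (dList_chain' _)
    (dList_ne_nil (A_nonempty hk1 hcard))
    (dList_ne_nil (Finset.card_pos.mp (by rw [compl_card hA hcard]; omega)))
    (junction_ascent hA hcard hn hk1 hk2 hnb), dList_length, dList_length, hcard,
    compl_card hA hcard]
  omega

include hn hk1 hk2 in
lemma wk_minimalPerm {A : Finset ℕ} (hA : A ⊆ Finset.Icc 1 n) (hcard : A.card = k)
    (hgood : ¬ Bad n k A) : MinimalPerm (n - 2) (wk n A) := by
  have hnb : ¬ A ⊆ Finset.Icc (n - k) n := fun hc => hgood (Or.inl hc)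
  have hwlen : (wk n A).length = n := (wk_isPermWord hn hk1 hk2 hA hcard).1
  refine ⟨wk_card_descents hn hk1 hk2 hA hcard hnb, ?_⟩
  rintro m σ hσ hm hd ⟨s, hsub, hrel⟩
  rw [hwlen] at hm
  have hσlen : σ.length = m := hσ.1
  have hdsub := descents_subset σ
  have hdcard := Finset.card_le_card hdsub
  rw [hd, Nat.card_Icc, hσlen] at hdcard
  have hmeq : m = n - 1 := by omega
  have hσpw : σ.Pairwise (· > ·) :=
    pairwise_of_descents_card (by rw [hd, hσlen, hmeq]; omega)
  have hspw : s.Pairwise (· > ·) := pairwise_of_sameRelOrder hrel hσpw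
  have hslen : s.length = n - 1 := by rw [hrel.1, hσlen, hmeq]
  exact hgood (bad_of_sub hA hcard hn hk1 hk2 hsub hslen hspw)

include hn hk1 hk2 in
lemma wk_hasAscentSeq {A : Finset ℕ} (hA : A ⊆ Finset.Icc 1 n) (hcard : A.card = k)
    (hnb : ¬ A ⊆ Finset.Icc (n - k) n) : HasAscentSeq (wk n A) [k, n - k] := by
  refine ⟨[dList A, dList (Finset.Icc 1 n \ A)], by simp [wk], ?_, ?_, ?_⟩
  · simp [dList_length, hcard, compl_card hA hcard]
  · intro b hb
    have hne1 : dList A ≠ [] := dList_ne_nil (A_nonempty hk1 hcard)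
    have hne2 : dList (Finset.Icc 1 n \ A) ≠ [] :=
      dList_ne_nil (Finset.card_pos.mp (by rw [compl_card hA hcard]; omega))
    rcases List.mem_cons.mp hb with h | h
    · exact ⟨h ▸ hne1, h ▸ dList_chain' A⟩
    · rcases List.mem_cons.mp h with h' | h'
      · exact ⟨h' ▸ hne2, h' ▸ dList_chain' _⟩
      · simp at h'
  · rw [List.Chain', List.isChain_pair]
    obtain ⟨x, hx⟩ : ∃ x, (dList A).getLast? = some x := by
      rw [List.getLast?_eq_getLast_of_ne_nil (dList_ne_nil (A_nonempty hk1 hcard))]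
      exact ⟨_, rfl⟩
    have hne2 : dList (Finset.Icc 1 n \ A) ≠ [] :=
      dList_ne_nil (Finset.card_pos.mp (by rw [compl_card hA hcard]; omega))
    obtain ⟨y, hy⟩ : ∃ y, (dList (Finset.Icc 1 n \ A)).head? = some y := by
      rw [List.head?_eq_head hne2]; exact ⟨_, rfl⟩
    exact ⟨x, hx, y, hy, junction_ascent hA hcard hn hk1 hk2 hnb x hx y hy⟩

include hn hk1 hk2 in
lemma good_mem_minimal {A : Finset ℕ} (hAg : A ∈ goodF n k) :
    wk n A ∈ minimalPermsAsc n [k, n - k] := by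
  obtain ⟨hA, hcard, hgood⟩ := mem_goodF.mp hAg
  have hnb : ¬ A ⊆ Finset.Icc (n - k) n := fun hc => hgood (Or.inl hc)
  refine ⟨wk_isPermWord hn hk1 hk2 hA hcard, ?_, wk_hasAscentSeq hn hk1 hk2 hA hcard hnb⟩
  rw [IsMinimal, wk_card_descents hn hk1 hk2 hA hcard hnb]
  exact wk_minimalPerm hn hk1 hk2 hA hcard hgood

include hn hk1 hk2 in
lemma minimal_eq_wk {w : List ℕ} (hw : w ∈ minimalPermsAsc n [k, n - k]) :
    ∃ A ∈ goodF n k, w = wk n A := by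
  obtain ⟨hperm, hmin, bs, hflat, hmap, hblocks, hchain⟩ := hw
  -- bs must be a two-element list
  have hbslen : bs.length = 2 := by
    have := congrArg List.length hmap
    simpa using this
  obtain ⟨b1, b2, hbs⟩ : ∃ b1 b2, bs = [b1, b2] := by
    match bs, hbslen with
    | [b1, b2], _ => exact ⟨b1, b2, rfl⟩
  subst hbs
  simp only [List.map_cons, List.map_nil, List.cons.injEq, and_true] at hmap
  obtain ⟨hl1, hl2⟩ := hmap
  have hw_eq : w = b1 ++ b2 := by
    rw [← hflat]; simp
  have hc1 : List.Chain' (· > ·) b1 := (hblocks b1 (by simp)).2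
  have hc2 : List.Chain' (· > ·) b2 := (hblocks b2 (by simp)).2
  have hne1 : b1 ≠ [] := (hblocks b1 (by simp)).1
  have hne2 : b2 ≠ [] := (hblocks b2 (by simp)).1
  have hp1 : b1.Pairwise (· > ·) := List.isChain_iff_pairwise.mp hc1
  have hp2 : b2.Pairwise (· > ·) := List.isChain_iff_pairwise.mp hc2
  have hnd1 : b1.Nodup := hp1.imp fun h => ne_of_gt h
  have hnd2 : b2.Nodup := hp2.imp fun h => ne_of_gt h
  set A := b1.toFinset with hA_def
  have hcardA : A.card = k := by
    rw [hA_def, List.toFinset_card_of_nodup hnd1, hl1]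
  have hwlen : w.length = n := hperm.1
  have hAsub : A ⊆ Finset.Icc 1 n := by
    intro x hx
    rw [hA_def, List.mem_toFinset] at hx
    have : x ∈ w := by rw [hw_eq]; exact List.mem_append.mpr (Or.inl hx)
    exact Finset.mem_Icc.mpr (hperm.2.2 x this)
  have hb1d : b1 = dList A := eq_dList hp1 rfl
  have hdisj : ∀ y ∈ b2, y ∉ b1 := by
    have hnd := hperm.2.1
    rw [hw_eq, List.nodup_append] at hnd
    exact fun y hy hy' => hnd.2.2 y hy' y hy rfl
  have hS2 : b2.toFinset = Finset.Icc 1 n \ A := by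
    apply Finset.eq_of_subset_of_card_le
    · intro y hy
      rw [List.mem_toFinset] at hy
      rw [Finset.mem_sdiff]
      constructor
      · have : y ∈ w := by rw [hw_eq]; exact List.mem_append.mpr (Or.inr hy)
        exact Finset.mem_Icc.mpr (hperm.2.2 y this)
      · rw [hA_def, List.mem_toFinset]
        exact hdisj y hy
    · rw [compl_card hAsub hcardA, List.toFinset_card_of_nodup hnd2, hl2]
  have hb2d : b2 = dList (Finset.Icc 1 n \ A) := eq_dList hp2 hS2
  have hw_wk : w = wk n A := by rw [hw_eq, hb1d, hb2d, wk]
  -- junction ascent from the chain condition on blocks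
  have hjunc : ∀ x ∈ b1.getLast?, ∀ y ∈ b2.head?, x < y := by
    obtain ⟨x, hx, y, hy, hxy⟩ := List.isChain_pair.mp hchain
    intro x' hx' y' hy'
    have h1 : x' = x := by
      rw [Option.mem_def] at hx hx'
      rw [hx] at hx'; exact (Option.some_inj.mp hx').symm
    have h2 : y' = y := by
      rw [Option.mem_def] at hy hy'
      rw [hy] at hy'; exact (Option.some_inj.mp hy').symm
    rw [h1, h2]; exact hxy
  have hdesc : (descents w).card = n - 2 := by
    rw [hw_eq, card_descents_append hc1 hc2 hne1 hne2 hjunc, hl1, hl2]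
    omega
  -- goodness
  have hgood : ¬ Bad n k A := by
    intro hbad
    obtain ⟨s, hsub, hslen, hspw⟩ := sub_of_bad hAsub hcardA hn hk1 hk2 hbad
    rw [← hw_wk] at hsub
    have hmin' := hmin
    rw [IsMinimal, hdesc] at hmin'
    apply hmin'.2 (n - 1) (decWord (n - 1)) (decWord_isPermWord (n - 1))
      (by rw [hwlen]; omega)
      (by rw [decWord_card_descents (n - 1) (by omega)]; omega)
    exact ⟨s, hsub, sameRelOrder_of_decreasing hspw (dList_pairwise _)
      (by rw [hslen, (decWord_isPermWord (n - 1)).1])⟩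
  exact ⟨A, mem_goodF.mpr ⟨hAsub, hcardA, hgood⟩, hw_wk⟩

end Main
end AuxMin
namespace AuxMin
open List Finset

section Count
variable {n k : ℕ} (hn : 4 ≤ n) (hk1 : 2 ≤ k) (hk2 : k ≤ n - 2)

include hn hk1 hk2 in
lemma card_badF :
    (((Finset.Icc 1 n).powersetCard k).filter (fun A => Bad n k A)).card = n := by
  set C0 := Finset.Icc (n - k + 2) n with hC0
  have hcardC0 : C0.card = k - 1 := by rw [hC0, Nat.card_Icc]; omega
  set B1 := (Finset.Icc (n - k) n).powersetCard k with hB1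
  set B2 := (Finset.Icc 1 (n - k + 1)).image (fun y => insert y C0) with hB2
  have hC0mem : ∀ y, y ∈ Finset.Icc 1 (n - k + 1) → y ∉ C0 := by
    intro y hy hyc
    rw [Finset.mem_Icc] at hy
    rw [hC0, Finset.mem_Icc] at hyc
    omega
  have hB2card : ∀ y ∈ Finset.Icc 1 (n - k + 1), (insert y C0).card = k := by
    intro y hy
    rw [Finset.card_insert_of_notMem (hC0mem y hy), hcardC0]
    omega
  have heq : ((Finset.Icc 1 n).powersetCard k).filter (fun A => Bad n k A) = B1 ∪ B2 := by
    ext A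
    rw [Finset.mem_filter, Finset.mem_powersetCard, Finset.mem_union]
    constructor
    · rintro ⟨⟨hsub, hcard⟩, hbad⟩
      rcases hbad with hbad | hbad
      · exact Or.inl (Finset.mem_powersetCard.mpr ⟨hbad, hcard⟩)
      · right
        have hcards : (A \ C0).card = 1 := by
          rw [Finset.card_sdiff_of_subset hbad, hcard, hcardC0]; omega
        obtain ⟨y, hy⟩ := Finset.card_eq_one.mp hcards
        have hyA : y ∈ A \ C0 := by rw [hy]; exact Finset.mem_singleton_self y
        rw [Finset.mem_sdiff] at hyA
        have hyIcc : y ∈ Finset.Icc 1 (n - k + 1) := by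
          have h1 := Finset.mem_Icc.mp (hsub hyA.1)
          have h2 : ¬ (n - k + 2 ≤ y ∧ y ≤ n) := fun hc => hyA.2 (by
            rw [hC0, Finset.mem_Icc]; exact hc)
          rw [Finset.mem_Icc]
          omega
        rw [hB2, Finset.mem_image]
        refine ⟨y, hyIcc, ?_⟩
        rw [Finset.insert_eq, ← hy, Finset.sdiff_union_of_subset hbad]
    · rintro (hA | hA)
      · rw [Finset.mem_powersetCard] at hA
        refine ⟨⟨hA.1.trans ?_, hA.2⟩, Or.inl hA.1⟩
        intro x hx
        rw [Finset.mem_Icc] at hx ⊢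
        omega
      · rw [hB2, Finset.mem_image] at hA
        obtain ⟨y, hy, hAy⟩ := hA
        have hy' := Finset.mem_Icc.mp hy
        refine ⟨⟨?_, by rw [← hAy]; exact hB2card y hy⟩, Or.inr (by
          rw [← hAy]; exact Finset.subset_insert y C0)⟩
        rw [← hAy]
        intro x hx
        rcases Finset.mem_insert.mp hx with h | h
        · rw [Finset.mem_Icc]; omega
        · rw [hC0, Finset.mem_Icc] at h
          rw [Finset.mem_Icc]
          omega
  have hcardB1 : B1.card = k + 1 := by
    rw [hB1, Finset.card_powersetCard, Nat.card_Icc,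
      (by omega : n + 1 - (n - k) = k + 1), Nat.choose_succ_self_right]
  have hcardB2 : B2.card = n - k + 1 := by
    have hinj : Set.InjOn (fun y => insert y C0) (Finset.Icc 1 (n - k + 1)) := by
      intro y hy y' hy' hins
      simp only [Set.mem_setOf_eq, Finset.coe_Icc, Set.mem_Icc] at hy hy'
      simp only at hins
      have h1 : y ∈ insert y' C0 := by
        rw [← hins]; exact Finset.mem_insert_self y C0
      rcases Finset.mem_insert.mp h1 with h | h
      · exact h
      · exact absurd h (hC0mem y (Finset.mem_Icc.mpr hy))
    rw [hB2, Finset.card_image_of_injOn hinj, Nat.card_Icc]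
    omega
  have hinter : B1 ∩ B2 = {insert (n - k) C0, insert (n - k + 1) C0} := by
    ext A
    rw [Finset.mem_inter, Finset.mem_insert, Finset.mem_singleton]
    constructor
    · rintro ⟨h1, h2⟩
      rw [hB2, Finset.mem_image] at h2
      obtain ⟨y, hy, hAy⟩ := h2
      rw [hB1, Finset.mem_powersetCard] at h1
      have hyA : y ∈ A := by rw [← hAy]; exact Finset.mem_insert_self y C0
      have hyge := Finset.mem_Icc.mp (h1.1 hyA)
      rw [Finset.mem_Icc] at hy
      have : y = n - k ∨ y = n - k + 1 := by omega
      rcases this with h | h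
      · exact Or.inl (by rw [← hAy, h])
      · exact Or.inr (by rw [← hAy, h])
    · have hC0sub : C0 ⊆ Finset.Icc (n - k) n := by
        intro x hx
        rw [hC0, Finset.mem_Icc] at hx
        rw [Finset.mem_Icc]
        omega
      rintro (h | h) <;> subst h <;> constructor
      · rw [hB1, Finset.mem_powersetCard]
        refine ⟨?_, hB2card (n - k) (by rw [Finset.mem_Icc]; omega)⟩
        intro x hx
        rcases Finset.mem_insert.mp hx with h | h
        · rw [Finset.mem_Icc]; omega
        · exact hC0sub h
      · rw [hB2, Finset.mem_image]
        exact ⟨n - k, by rw [Finset.mem_Icc]; omega, rfl⟩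
      · rw [hB1, Finset.mem_powersetCard]
        refine ⟨?_, hB2card (n - k + 1) (by rw [Finset.mem_Icc]; omega)⟩
        intro x hx
        rcases Finset.mem_insert.mp hx with h | h
        · rw [Finset.mem_Icc]; omega
        · exact hC0sub h
      · rw [hB2, Finset.mem_image]
        exact ⟨n - k + 1, by rw [Finset.mem_Icc]; omega, rfl⟩
  have hintercard : (B1 ∩ B2).card = 2 := by
    rw [hinter]
    rw [Finset.card_insert_of_notMem, Finset.card_singleton]
    rw [Finset.mem_singleton]
    intro hc
    have : n - k ∈ insert (n - k + 1) C0 := by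
      rw [← hc]; exact Finset.mem_insert_self _ _
    rcases Finset.mem_insert.mp this with h | h
    · omega
    · rw [hC0, Finset.mem_Icc] at h; omega
  have := Finset.card_union_add_card_inter B1 B2
  rw [heq, hcardB1, hcardB2, hintercard] at *
  omega

include hn hk1 hk2 in
lemma card_goodF : (goodF n k).card + n = n.choose k := by
  have htot := Finset.card_filter_add_card_filter_not
    (s := (Finset.Icc 1 n).powersetCard k) (p := fun A => Bad n k A)
  rw [card_badF hn hk1 hk2, Finset.card_powersetCard, Nat.card_Icc,
    (by omega : n + 1 - 1 = n)] at htot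
  rw [← htot, goodF]
  omega

include hn hk1 hk2 in
lemma minimalPermsAsc_eq :
    minimalPermsAsc n [k, n - k] = ↑((goodF n k).image (wk n)) := by
  ext w
  simp only [Finset.coe_image, Set.mem_image, Finset.mem_coe]
  constructor
  · intro hw
    obtain ⟨A, hA, hwA⟩ := minimal_eq_wk hn hk1 hk2 hw
    exact ⟨A, hA, hwA.symm⟩
  · rintro ⟨A, hA, rfl⟩
    exact good_mem_minimal hn hk1 hk2 hA

include hn hk1 hk2 in
lemma fcount_eq : FCount n [k, n - k] = (goodF n k).card := by
  rw [FCount, minimalPermsAsc_eq hn hk1 hk2, Set.ncard_coe_finset]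
  apply Finset.card_image_of_injOn
  intro A hA A' hA' heq
  obtain ⟨hs, hc, -⟩ := mem_goodF.mp hA
  obtain ⟨hs', hc', -⟩ := mem_goodF.mp hA'
  have hl : (dList A).length = (dList A').length := by
    rw [dList_length, dList_length, hc, hc']
  have := (List.append_inj heq hl).1
  rw [← dList_toFinset A, ← dList_toFinset A', this]

end Count
end AuxMin

/-- for `n ≥ 4` and `2 ≤ k ≤ n - 2`, `F_{k,n-k}(n) = binom(n,k) - n`. -/
theorem FCount_two_blocks (n k : ℕ) (hn : 4 ≤ n) (hk1 : 2 ≤ k) (hk2 : k ≤ n - 2) :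
    (FCount n [k, n - k] : ℤ) = (n.choose k : ℤ) - (n : ℤ) := by
  have h1 := AuxMin.card_goodF hn hk1 hk2
  have h2 := AuxMin.fcount_eq hn hk1 hk2
  rw [h2]
  omega
end

section
/- For n ≥ 3, the number of minimal permutations of length n with n − 2 descents is f_{n−2}(n) = 2^n − n(n−1) − 2. -/
private lemma pairwise_gt_getD {l : List ℕ} (h : l.Pairwise (· > ·)) {i j : ℕ}
    (hij : i < j) (hj : j < l.length) : l.getD j 0 < l.getD i 0 := by
  rw [List.getD_eq_getElem _ _ hj, List.getD_eq_getElem _ _ (by omega : i < l.length)]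
  exact List.pairwise_iff_getElem.1 h i j (by omega) hj hij

private lemma pairwise_gt_of_consec {l : List ℕ}
    (h : ∀ i, i + 1 < l.length → l.getD (i+1) 0 < l.getD i 0) : l.Pairwise (· > ·) := by
  rw [← List.isChain_iff_pairwise, List.isChain_iff_getElem]
  intro i hi
  have h2 : i + 1 < l.length := by omega
  have := h i h2
  rwa [List.getD_eq_getElem _ _ h2, List.getD_eq_getElem _ _ (by omega : i < l.length)] at this


private lemma exists_eraseIdx_of_sublist {s w : List ℕ} (h : s.Sublist w)
    (hl : s.length + 1 = w.length) : ∃ k, k < w.length ∧ s = w.eraseIdx k := by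
  induction h with
  | slnil => simp at hl
  | @cons l₁ l₂ a h ih =>
    have hlen : l₁.length = l₂.length := by simp at hl; omega
    refine ⟨0, by simp, ?_⟩
    rw [h.eq_of_length hlen]
    simp [List.eraseIdx]
  | @cons_cons l₁ l₂ a h ih =>
    obtain ⟨k, hk, hs⟩ := ih (by simpa using hl)
    exact ⟨k + 1, by simpa using hk, by simp [List.eraseIdx, hs]⟩

private lemma getD_eraseIdx_lt {w : List ℕ} {k i : ℕ} (h : i < k) (hi : i < (w.eraseIdx k).length) :
    (w.eraseIdx k).getD i 0 = w.getD i 0 := by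
  rw [List.getD_eq_getElem _ _ hi, List.getElem_eraseIdx, dif_pos h, List.getD_eq_getElem]

private lemma getD_eraseIdx_ge {w : List ℕ} {k i : ℕ} (h : k ≤ i) (hi : i < (w.eraseIdx k).length) :
    (w.eraseIdx k).getD i 0 = w.getD (i+1) 0 := by
  rw [List.getD_eq_getElem _ _ hi, List.getElem_eraseIdx, dif_neg (by omega), List.getD_eq_getElem]

private def decword (m : ℕ) : List ℕ := (List.range m).reverse.map (· + 1)

private lemma decword_length (m : ℕ) : (decword m).length = m := by simp [decword]

private lemma decword_pairwise (m : ℕ) : (decword m).Pairwise (· > ·) := by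
  have h1 : List.Pairwise (fun a b => b < a) (List.range m).reverse := by
    rw [List.pairwise_reverse]
    exact List.pairwise_lt_range (n := m)
  exact h1.map _ (fun {a b} h => by omega)

private lemma decword_perm (m : ℕ) : IsPermWord m (decword m) := by
  refine ⟨decword_length m, (decword_pairwise m).imp (fun {a b} h => ne_of_gt h), ?_⟩
  · intro x hx
    simp only [decword, List.mem_map, List.mem_reverse, List.mem_range] at hx
    obtain ⟨y, hy, rfl⟩ := hx
    omega

private lemma descents_subset (w : List ℕ) : descents w ⊆ Finset.Icc 1 (w.length - 1) := by
  intro i hi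
  simp only [descents, Finset.mem_filter, Finset.mem_range] at hi
  obtain ⟨_, h1, h2, _⟩ := hi
  simp only [Finset.mem_Icc]
  omega

private lemma descents_card_le (w : List ℕ) : (descents w).card ≤ w.length - 1 := by
  have := Finset.card_le_card (descents_subset w)
  simpa using this

private lemma descents_of_pairwise {w : List ℕ} (h : w.Pairwise (· > ·)) :
    descents w = Finset.Icc 1 (w.length - 1) := by
  refine le_antisymm (descents_subset w) ?_
  intro i hi
  simp only [Finset.mem_Icc] at hi
  simp only [descents, Finset.mem_filter, Finset.mem_range]
  have hlen : 1 ≤ w.length := by omega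
  refine ⟨by omega, hi.1, by omega, pairwise_gt_getD h (by omega) (by omega)⟩

private lemma pairwise_of_descents_card {w : List ℕ} (hlen : 1 ≤ w.length)
    (h : (descents w).card = w.length - 1) : w.Pairwise (· > ·) := by
  have hsub := descents_subset w
  have : descents w = Finset.Icc 1 (w.length - 1) :=
    Finset.eq_of_subset_of_card_le hsub (by simp [h])
  refine pairwise_gt_of_consec (fun i hi => ?_)
  have : (i+1) ∈ descents w := by rw [this]; simp only [Finset.mem_Icc]; omega
  simp only [descents, Finset.mem_filter] at this
  obtain ⟨_, _, _, hd⟩ := this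
  simpa using hd


private lemma lt_iff_of_pairwise {l : List ℕ} (h : l.Pairwise (· > ·)) {p q : ℕ}
    (hp : p < l.length) (hq : q < l.length) : l.getD p 0 < l.getD q 0 ↔ q < p := by
  constructor
  · intro hlt
    rcases lt_trichotomy p q with h' | h' | h'
    · exact absurd hlt (by have := pairwise_gt_getD h h' hq; omega)
    · exact absurd hlt (by rw [h']; exact lt_irrefl _)
    · exact h'
  · intro h'
    exact pairwise_gt_getD h h' hp

private lemma sameRelOrder_iff_pairwise {s σ : List ℕ} (hσ : σ.Pairwise (· > ·))
    (hl : s.length = σ.length) : SameRelOrder s σ ↔ s.Pairwise (· > ·) := by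
  constructor
  · rintro ⟨-, h⟩
    refine pairwise_gt_of_consec (fun i hi => ?_)
    exact (h (i+1) i hi (by omega)).2 (pairwise_gt_getD hσ (by omega) (by omega))
  · intro hs
    refine ⟨hl, fun p q hp hq => ?_⟩
    rw [lt_iff_of_pairwise hs hp hq, lt_iff_of_pairwise hσ (by omega) (by omega)]

/-- Minimality criterion: a perm word of length `n` with `n-2` descents is minimal iff
it has no strictly decreasing sublist of length `n-1`. -/
private lemma minimal_iff_no_dec {n : ℕ} (hn : 3 ≤ n) {w : List ℕ} (hw : IsPermWord n w)
    (hd : (descents w).card = n - 2) :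
    MinimalPerm (n-2) w ↔ ¬ ∃ s : List ℕ, s.Sublist w ∧ s.length = n - 1 ∧ s.Pairwise (· > ·) := by
  constructor
  · rintro ⟨-, hmin⟩ ⟨s, hs, hlen, hdec⟩
    refine hmin (n-1) (decword (n-1)) (decword_perm (n-1)) (by rw [hw.1]; omega) ?_ ⟨s, hs, ?_⟩
    · rw [descents_of_pairwise (decword_pairwise _), Nat.card_Icc, decword_length]; omega
    · rw [sameRelOrder_iff_pairwise (decword_pairwise _) (by rw [hlen, decword_length])]
      exact hdec
  · intro hno
    refine ⟨hd, fun m σ hσ hm hdσ ⟨s, hs, hrel⟩ => ?_⟩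
    have hslen : s.length = m := hrel.1.trans hσ.1
    have hm2 : m = n - 1 := by
      have h1 := descents_card_le σ
      rw [hσ.1] at h1
      rw [hw.1] at hm
      omega
    have hσdec : σ.Pairwise (· > ·) := by
      refine pairwise_of_descents_card (by rw [hσ.1]; omega) ?_
      rw [hσ.1, hdσ]; omega
    refine hno ⟨s, hs, by omega, ?_⟩
    rw [← sameRelOrder_iff_pairwise hσdec (by rw [hslen, hσ.1])]
    exact hrel

private lemma getD_take {w : List ℕ} {a j : ℕ} (h : j < a) (hj : j < w.length) :
    (w.take a).getD j 0 = w.getD j 0 := by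
  rw [List.getD_eq_getElem _ _ (by simp [List.length_take]; omega),
    List.getD_eq_getElem _ _ hj, List.getElem_take]

private lemma getD_drop {w : List ℕ} {a j : ℕ} (h : a + j < w.length) :
    (w.drop a).getD j 0 = w.getD (a + j) 0 := by
  rw [List.getD_eq_getElem _ _ (by simp [List.length_drop]; omega),
    List.getD_eq_getElem _ _ h, List.getElem_drop]

/-- Descents of a two-decreasing-run word. -/
private lemma descents_two_run {u v : List ℕ} (hu : u.Pairwise (· > ·)) (hv : v.Pairwise (· > ·))
    (h1 : 1 ≤ u.length) (h2 : 1 ≤ v.length)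
    (hasc : u.getD (u.length - 1) 0 < v.getD 0 0) :
    descents (u ++ v) = (Finset.Icc 1 (u.length + v.length - 1)).erase u.length := by
  set lu := u.length with hlu
  set lv := v.length with hlv
  have hwl : (u ++ v).length = lu + lv := by simp [hlu, hlv]
  ext i
  simp only [descents, Finset.mem_filter, Finset.mem_range, Finset.mem_erase, Finset.mem_Icc,
    DescentAt, hwl]
  constructor
  · rintro ⟨hi, hi1, hi2, hdes⟩
    refine ⟨?_, hi1, by omega⟩
    rintro rfl
    rw [List.getD_append_right _ _ _ _ (le_refl lu), Nat.sub_self,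
      List.getD_append _ _ _ _ (by omega)] at hdes
    omega
  · rintro ⟨hne, hi1, hi2⟩
    refine ⟨by omega, hi1, by omega, ?_⟩
    rcases lt_or_gt_of_ne hne with h | h
    · rw [List.getD_append _ _ _ _ (by omega), List.getD_append _ _ _ _ (by omega)]
      have := pairwise_gt_getD hu (show i - 1 < i by omega) (show i < lu by omega)
      exact this
    · rw [List.getD_append_right _ _ _ _ (by omega), List.getD_append_right _ _ _ _ (by omega)]
      exact pairwise_gt_getD hv (show i - 1 - lu < i - lu by omega) (by omega)

private lemma descents_card_two_run {u v : List ℕ} (hu : u.Pairwise (· > ·))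
    (hv : v.Pairwise (· > ·)) (h1 : 1 ≤ u.length) (h2 : 1 ≤ v.length)
    (hasc : u.getD (u.length - 1) 0 < v.getD 0 0) :
    (descents (u ++ v)).card = u.length + v.length - 2 := by
  rw [descents_two_run hu hv h1 h2 hasc, Finset.card_erase_of_mem (by simp [Finset.mem_Icc]; omega),
    Nat.card_Icc]
  omega

/-- Structure: a nodup word with `len - 2` descents has a unique ascent `a` and splits
into two decreasing runs. -/
private lemma two_run_of_descents {w : List ℕ} (hnd : w.Nodup) (h3 : 3 ≤ w.length)
    (hd : (descents w).card = w.length - 2) :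
    ∃ a, 1 ≤ a ∧ a ≤ w.length - 1 ∧
      descents w = (Finset.Icc 1 (w.length - 1)).erase a ∧
      w.getD (a - 1) 0 < w.getD a 0 ∧
      (w.take a).Pairwise (· > ·) ∧ (w.drop a).Pairwise (· > ·) := by
  set n := w.length with hn
  have hsub := descents_subset w
  have hcard : ((Finset.Icc 1 (n - 1)) \ descents w).card = 1 := by
    rw [Finset.card_sdiff_of_subset hsub, Nat.card_Icc, hd]; omega
  obtain ⟨a, ha⟩ := Finset.card_eq_one.1 hcard
  have haIcc : a ∈ Finset.Icc 1 (n - 1) := by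
    have : a ∈ Finset.Icc 1 (n-1) \ descents w := by rw [ha]; simp
    exact (Finset.mem_sdiff.1 this).1
  have hand : a ∉ descents w := by
    have : a ∈ Finset.Icc 1 (n-1) \ descents w := by rw [ha]; simp
    exact (Finset.mem_sdiff.1 this).2
  simp only [Finset.mem_Icc] at haIcc
  have hdesc : ∀ i, 1 ≤ i → i ≤ n - 1 → i ≠ a → w.getD i 0 < w.getD (i-1) 0 := by
    intro i hi1 hi2 hia
    have : i ∈ descents w := by
      by_contra hcon
      have : i ∈ Finset.Icc 1 (n-1) \ descents w := by
        simp only [Finset.mem_sdiff, Finset.mem_Icc]; exact ⟨⟨hi1, hi2⟩, hcon⟩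
      rw [ha] at this
      simp at this
      omega
    simp only [descents, Finset.mem_filter] at this
    simp only [DescentAt] at this
    exact this.2.2.2
  have hne : w.getD a 0 ≠ w.getD (a-1) 0 := by
    rw [List.getD_eq_getElem _ _ (by omega), List.getD_eq_getElem _ _ (by omega)]
    simp only [ne_eq, hnd.getElem_inj_iff]
    omega
  have hasc : w.getD (a - 1) 0 < w.getD a 0 := by
    by_contra hcon
    refine hand ?_
    simp only [descents, Finset.mem_filter, Finset.mem_range]
    simp only [DescentAt]
    refine ⟨by omega, haIcc.1, by omega, by omega⟩
  refine ⟨a, haIcc.1, haIcc.2, ?_, hasc, ?_, ?_⟩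
  · ext i
    simp only [Finset.mem_erase, Finset.mem_Icc]
    constructor
    · intro hi
      refine ⟨fun hia => hand (hia ▸ hi), ?_⟩
      have := hsub hi
      simpa [Finset.mem_Icc] using this
    · rintro ⟨hia, hi1, hi2⟩
      simp only [descents, Finset.mem_filter, Finset.mem_range]
      simp only [DescentAt]
      exact ⟨by omega, hi1, by omega, hdesc i hi1 hi2 hia⟩
  · refine pairwise_gt_of_consec (fun i hi => ?_)
    rw [List.length_take] at hi
    have hia : i + 1 < a := by omega
    rw [getD_take (by omega) (by omega), getD_take (by omega) (by omega)]
    have := hdesc (i+1) (by omega) (by omega) (by omega)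
    simpa using this
  · refine pairwise_gt_of_consec (fun i hi => ?_)
    rw [List.length_drop] at hi
    rw [getD_drop (by omega), getD_drop (by omega)]
    have := hdesc (a+i+1) (by omega) (by omega) (by omega)
    have heq : a + (i+1) = a + i + 1 := by omega
    rw [heq]
    simpa using this

private lemma run_lt_take {w : List ℕ} {a i j : ℕ} (h : (w.take a).Pairwise (· > ·))
    (hij : i < j) (hj : j < a) (hj2 : j < w.length) : w.getD j 0 < w.getD i 0 := by
  have := pairwise_gt_getD h hij (by rw [List.length_take]; omega)
  rwa [getD_take hj hj2, getD_take (by omega) (by omega)] at this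

private lemma run_lt_drop {w : List ℕ} {a i j : ℕ} (h : (w.drop a).Pairwise (· > ·))
    (ha : a ≤ i) (hij : i < j) (hj : j < w.length) : w.getD j 0 < w.getD i 0 := by
  have := pairwise_gt_getD h (show i - a < j - a by omega) (by rw [List.length_drop]; omega)
  rwa [getD_drop (by omega), getD_drop (by omega), Nat.add_sub_cancel' ha,
    Nat.add_sub_cancel' (by omega : a ≤ j)] at this

/-- Sufficiency: a two-run word with the junction conditions is a minimal permutation. -/
private lemma minimalPerm_of_structure {n : ℕ} (hn : 3 ≤ n) {u v : List ℕ}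
    (hu : u.Pairwise (· > ·)) (hv : v.Pairwise (· > ·))
    (hlu : 2 ≤ u.length) (hlv : 2 ≤ v.length) (hlen : u.length + v.length = n)
    (hperm : IsPermWord n (u ++ v))
    (hc2 : u.getD (u.length - 2) 0 < v.getD 0 0)
    (hc3 : u.getD (u.length - 1) 0 < v.getD 1 0) :
    MinimalPerm (n-2) (u ++ v) := by
  set lu := u.length with hlu'
  set w := u ++ v with hw
  have hwl : w.length = n := by simp [hw]; omega
  have hasc : u.getD (lu - 1) 0 < v.getD 0 0 :=
    lt_trans (pairwise_gt_getD hu (show lu - 2 < lu - 1 by omega) (by omega)) hc2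
  -- values of w
  have hEu : ∀ i, i < lu → w.getD i 0 = u.getD i 0 := fun i hi => List.getD_append _ _ _ _ hi
  have hEv : ∀ i, lu ≤ i → w.getD i 0 = v.getD (i - lu) 0 := fun i hi =>
    List.getD_append_right _ _ _ _ hi
  have hd : (descents w).card = n - 2 := by
    rw [descents_card_two_run hu hv (by omega) (by omega) hasc]; omega
  rw [minimal_iff_no_dec hn hperm hd]
  rintro ⟨s, hs, hlen', hdec⟩
  obtain ⟨k, hk, rfl⟩ := exists_eraseIdx_of_sublist hs (by omega)
  rw [hwl] at hk
  have hsl : (w.eraseIdx k).length = n - 1 := by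
    rw [List.length_eraseIdx]; rw [hwl]; simp [hk]
  have hwasc : w.getD (lu - 1) 0 < w.getD lu 0 := by
    rw [hEu _ (by omega), hEv _ (le_refl _), Nat.sub_self]; exact hasc
  rcases lt_trichotomy k (lu - 1) with hcase | hcase | hcase
  · -- both w_{lu-1}, w_{lu} survive, shifted left by one
    have h1 : (w.eraseIdx k).getD (lu - 2) 0 = w.getD (lu - 1) 0 := by
      rw [getD_eraseIdx_ge (by omega) (by omega)]; congr 1; omega
    have h2 : (w.eraseIdx k).getD (lu - 1) 0 = w.getD lu 0 := by
      rw [getD_eraseIdx_ge (by omega) (by omega)]; congr 1; omega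
    have := pairwise_gt_getD hdec (show lu - 2 < lu - 1 by omega) (by omega)
    rw [h1, h2] at this
    omega
  · -- w_{lu} is dropped? no : k = lu - 1, i.e. last of u dropped
    have h1 : (w.eraseIdx k).getD (lu - 2) 0 = w.getD (lu - 2) 0 :=
      getD_eraseIdx_lt (by omega) (by omega)
    have h2 : (w.eraseIdx k).getD (lu - 1) 0 = w.getD lu 0 := by
      rw [getD_eraseIdx_ge (by omega) (by omega)]; congr 1; omega
    have := pairwise_gt_getD hdec (show lu - 2 < lu - 1 by omega) (by omega)
    rw [h1, h2] at this
    have e1 : w.getD (lu - 2) 0 = u.getD (lu - 2) 0 := hEu (lu - 2) (by omega)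
    have e2 : w.getD lu 0 = v.getD 0 0 := by
      rw [hEv lu (le_refl _), Nat.sub_self]
    rw [e1, e2] at this
    omega
  · rcases eq_or_lt_of_le (show lu ≤ k by omega) with hcase2 | hcase2
    · -- k = lu: first of v dropped
      have h1 : (w.eraseIdx k).getD (lu - 1) 0 = w.getD (lu - 1) 0 :=
        getD_eraseIdx_lt (by omega) (by omega)
      have h2 : (w.eraseIdx k).getD lu 0 = w.getD (lu + 1) 0 := by
        rw [getD_eraseIdx_ge (by omega) (by omega)]
      have := pairwise_gt_getD hdec (show lu - 1 < lu by omega) (by omega)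
      rw [h1, h2] at this
      have e1 : w.getD (lu - 1) 0 = u.getD (lu - 1) 0 := hEu (lu - 1) (by omega)
      have e2 : w.getD (lu + 1) 0 = v.getD 1 0 := by
        rw [hEv (lu + 1) (by omega)]; congr 1; omega
      rw [e1, e2] at this
      omega
    · -- k > lu : both w_{lu-1}, w_{lu} survive in place
      have h1 : (w.eraseIdx k).getD (lu - 1) 0 = w.getD (lu - 1) 0 :=
        getD_eraseIdx_lt (by omega) (by omega)
      have h2 : (w.eraseIdx k).getD lu 0 = w.getD lu 0 :=
        getD_eraseIdx_lt (by omega) (by omega)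
      have := pairwise_gt_getD hdec (show lu - 1 < lu by omega) (by omega)
      rw [h1, h2] at this
      omega

/-- Necessity: a minimal permutation of length `n` with `n-2` descents has the two-run
structure with junction conditions. -/
private lemma structure_of_minimalPerm {n : ℕ} (hn : 3 ≤ n) {w : List ℕ}
    (hperm : IsPermWord n w) (hmin : MinimalPerm (n-2) w) :
    ∃ a, 2 ≤ a ∧ a + 2 ≤ n ∧
      (w.take a).Pairwise (· > ·) ∧ (w.drop a).Pairwise (· > ·) ∧
      w.getD (a-1) 0 < w.getD a 0 ∧
      w.getD (a-2) 0 < w.getD a 0 ∧ w.getD (a-1) 0 < w.getD (a+1) 0 := by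
  obtain ⟨hwl, hnd, hval⟩ := hperm
  have hd := hmin.1
  obtain ⟨a, ha1, ha2, hdesc, hasc, htake, hdrop⟩ :=
    two_run_of_descents hnd (by omega) (by rw [hwl]; exact hd)
  rw [minimal_iff_no_dec hn ⟨hwl, hnd, hval⟩ hd] at hmin
  have hane : a ≠ 1 := by
    rintro rfl
    exact hmin ⟨w.drop 1, List.drop_sublist 1 w, by rw [List.length_drop]; omega, hdrop⟩
  have hane2 : a ≠ n - 1 := by
    rintro rfl
    refine hmin ⟨w.take (n-1), List.take_sublist _ w,
      by rw [List.length_take]; omega, htake⟩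
  rw [hwl] at ha2
  have hgetne : ∀ i j, i < w.length → j < w.length → i ≠ j → w.getD i 0 ≠ w.getD j 0 := by
    intro i j hi hj hij
    rw [List.getD_eq_getElem _ _ hi, List.getD_eq_getElem _ _ hj]
    simp only [ne_eq, hnd.getElem_inj_iff]
    exact hij
  have hc2 : w.getD (a-2) 0 < w.getD a 0 := by
    by_contra hcon
    have hgt : w.getD a 0 < w.getD (a-2) 0 :=
      lt_of_le_of_ne (by omega) (hgetne a (a-2) (by omega) (by omega) (by omega))
    refine hmin ⟨w.eraseIdx (a-1), List.eraseIdx_sublist w (a-1), ?_, ?_⟩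
    · rw [List.length_eraseIdx]; simp only [if_pos (show a - 1 < w.length by omega)]; omega
    · have hel : (w.eraseIdx (a-1)).length = n - 1 := by
        rw [List.length_eraseIdx]; simp only [if_pos (show a - 1 < w.length by omega)]; omega
      refine pairwise_gt_of_consec (fun i hi => ?_)
      rw [hel] at hi
      rcases lt_trichotomy (i+1) (a-1) with hca | hca | hca
      · rw [getD_eraseIdx_lt (by omega) (by omega), getD_eraseIdx_lt (by omega) (by omega)]
        exact run_lt_take htake (by omega) (by omega) (by omega)
      · rw [getD_eraseIdx_ge (by omega) (by omega), getD_eraseIdx_lt (by omega) (by omega)]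
        have : i + 1 + 1 = a := by omega
        rw [this, show i = a - 2 by omega]
        exact hgt
      · rw [getD_eraseIdx_ge (by omega) (by omega), getD_eraseIdx_ge (by omega) (by omega)]
        exact run_lt_drop hdrop (by omega) (by omega) (by omega)
  have hc3 : w.getD (a-1) 0 < w.getD (a+1) 0 := by
    by_contra hcon
    have hgt : w.getD (a+1) 0 < w.getD (a-1) 0 :=
      lt_of_le_of_ne (by omega) (hgetne (a+1) (a-1) (by omega) (by omega) (by omega))
    refine hmin ⟨w.eraseIdx a, List.eraseIdx_sublist w a, ?_, ?_⟩
    · rw [List.length_eraseIdx]; simp only [if_pos (show a < w.length by omega)]; omega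
    · have hel : (w.eraseIdx a).length = n - 1 := by
        rw [List.length_eraseIdx]; simp only [if_pos (show a < w.length by omega)]; omega
      refine pairwise_gt_of_consec (fun i hi => ?_)
      rw [hel] at hi
      rcases lt_trichotomy (i+1) a with hca | hca | hca
      · rw [getD_eraseIdx_lt (by omega) (by omega), getD_eraseIdx_lt (by omega) (by omega)]
        exact run_lt_take htake (by omega) (by omega) (by omega)
      · rw [getD_eraseIdx_ge (by omega) (by omega), getD_eraseIdx_lt (by omega) (by omega)]
        rw [show i + 1 + 1 = a + 1 by omega, show i = a - 1 by omega]
        exact hgt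
      · rw [getD_eraseIdx_ge (by omega) (by omega), getD_eraseIdx_ge (by omega) (by omega)]
        exact run_lt_drop hdrop (by omega) (by omega) (by omega)
  exact ⟨a, by omega, by omega, htake, hdrop, hasc, hc2, hc3⟩

private def descList (S : Finset ℕ) : List ℕ := (S.sort (· ≤ ·)).reverse

private lemma descList_length (S : Finset ℕ) : (descList S).length = S.card := by
  simp [descList, Finset.length_sort]

private lemma descList_pairwise (S : Finset ℕ) : (descList S).Pairwise (· > ·) := by
  rw [descList, List.pairwise_reverse]
  exact List.sortedLT_iff_pairwise.1 (Finset.sortedLT_sort S)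

private lemma mem_descList {S : Finset ℕ} {x : ℕ} : x ∈ descList S ↔ x ∈ S := by
  simp [descList, Finset.mem_sort]

private lemma descList_nodup (S : Finset ℕ) : (descList S).Nodup := by
  rw [descList, List.nodup_reverse]
  exact Finset.sort_nodup S _

private lemma descList_toFinset (S : Finset ℕ) : (descList S).toFinset = S := by
  ext x; simp [mem_descList]

private lemma descList_of_pairwise {l : List ℕ} (h : l.Pairwise (· > ·)) :
    descList l.toFinset = l := by
  have hnd : l.Nodup := h.imp (fun {a b} h => ne_of_gt h)
  have hperm : (l.toFinset.sort (· ≤ ·)).Perm l.reverse :=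
    List.perm_of_nodup_nodup_toFinset_eq (Finset.sort_nodup _ _) (by simp [hnd])
      (by rw [Finset.sort_toFinset]; simp)
  have hsorted : List.Pairwise (· ≤ ·) l.reverse := by
    apply List.Pairwise.imp le_of_lt
    rw [List.pairwise_reverse]
    exact h
  have := List.Perm.eq_of_pairwise' (Finset.pairwise_sort _ _) hsorted hperm
  rw [descList, this, List.reverse_reverse]

private lemma sort_eq_min'_cons {S : Finset ℕ} (h : S.Nonempty) :
    S.sort (· ≤ ·) = S.min' h :: (S.erase (S.min' h)).sort (· ≤ ·) := by
  have hmem : S.min' h ∈ S := S.min'_mem h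
  refine (fun hp hs => List.Perm.eq_of_pairwise' (Finset.pairwise_sort _ _) hs hp) ?_ ?_
  · refine List.perm_of_nodup_nodup_toFinset_eq (Finset.sort_nodup _ _) ?_ ?_
    · refine List.nodup_cons.2 ⟨?_, Finset.sort_nodup _ _⟩
      simp [Finset.mem_sort]
    · rw [Finset.sort_toFinset]
      simp only [List.toFinset_cons, Finset.sort_toFinset]
      rw [Finset.insert_erase hmem]
  · rw [List.pairwise_cons]
    refine ⟨fun b hb => ?_, Finset.pairwise_sort _ _⟩
    rw [Finset.mem_sort] at hb
    exact S.min'_le b (Finset.mem_of_mem_erase hb)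

private lemma descList_erase_min {S : Finset ℕ} (h : S.Nonempty) :
    descList S = descList (S.erase (S.min' h)) ++ [S.min' h] := by
  rw [descList, sort_eq_min'_cons h]
  simp [descList]

private lemma descList_cons_max {S : Finset ℕ} (h : S.Nonempty) :
    descList S = S.max' h :: descList (S.erase (S.max' h)) := by
  set m := S.max' h with hm
  have hsort : S.sort (· ≤ ·) = (S.erase m).sort (· ≤ ·) ++ [m] := by
    refine (fun hp hs => List.Perm.eq_of_pairwise' (Finset.pairwise_sort _ _) hs hp) ?_ ?_
    · refine List.perm_of_nodup_nodup_toFinset_eq (Finset.sort_nodup _ _) ?_ ?_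
      · refine List.Nodup.append (Finset.sort_nodup _ _) (List.nodup_singleton m) ?_
        intro x hx hx'
        rw [Finset.mem_sort] at hx
        simp only [List.mem_singleton] at hx'
        subst hx'
        exact (Finset.mem_erase.1 hx).1 rfl
      · ext y
        simp only [List.toFinset_append, Finset.sort_toFinset, List.toFinset_cons,
          List.toFinset_nil, Finset.mem_union, Finset.mem_erase, Finset.mem_insert,
          Finset.notMem_empty, or_false]
        constructor
        · intro hy
          rcases eq_or_ne y m with rfl | hne
          · exact Or.inr rfl
          · exact Or.inl ⟨hne, hy⟩
        · rintro (⟨-, hy⟩ | rfl)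
          · exact hy
          · exact S.max'_mem h
    · rw [List.pairwise_append]
      refine ⟨Finset.pairwise_sort _ _, List.pairwise_singleton _ _, fun x hx y hy => ?_⟩
      rw [Finset.mem_sort] at hx
      simp only [List.mem_singleton] at hy
      subst hy
      exact S.le_max' x (Finset.mem_of_mem_erase hx)
  rw [descList, hsort]
  simp [descList]

private lemma descList_getD_last {S : Finset ℕ} (h : S.Nonempty) :
    (descList S).getD (S.card - 1) 0 = S.min' h := by
  have hc : 1 ≤ S.card := Finset.card_pos.2 h
  have hec : (S.erase (S.min' h)).card = S.card - 1 := Finset.card_erase_of_mem (S.min'_mem h)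
  rw [descList_erase_min h,
    List.getD_append_right _ _ _ _ (le_of_eq (by rw [descList_length, hec]))]
  rw [descList_length, hec]
  simp

private lemma descList_getD_head {S : Finset ℕ} (h : S.Nonempty) :
    (descList S).getD 0 0 = S.max' h := by
  rw [descList_cons_max h]
  simp

private lemma descList_getD_secondlast {S : Finset ℕ} (h2 : 2 ≤ S.card) :
    (descList S).getD (S.card - 2) 0 =
      (S.erase (S.min' (Finset.card_pos.1 (by omega)))).min'
        (by rw [← Finset.card_pos, Finset.card_erase_of_mem (Finset.min'_mem _ _)]; omega) := by
  have h : S.Nonempty := Finset.card_pos.1 (by omega)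
  set m := S.min' h
  have hec : (S.erase m).card = S.card - 1 := Finset.card_erase_of_mem (S.min'_mem h)
  have he : (S.erase m).Nonempty := by rw [← Finset.card_pos, hec]; omega
  rw [descList_erase_min h, List.getD_append _ _ _ _ (by rw [descList_length, hec]; omega)]
  have := descList_getD_last he
  rw [hec] at this
  rw [show S.card - 2 = S.card - 1 - 1 by omega, this]

private lemma descList_getD_second {S : Finset ℕ} (h2 : 2 ≤ S.card) :
    (descList S).getD 1 0 =
      (S.erase (S.max' (Finset.card_pos.1 (by omega)))).max'
        (by rw [← Finset.card_pos, Finset.card_erase_of_mem (Finset.max'_mem _ _)]; omega) := by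
  have h : S.Nonempty := Finset.card_pos.1 (by omega)
  set m := S.max' h with hm
  have hec : (S.erase m).card = S.card - 1 := Finset.card_erase_of_mem (S.max'_mem h)
  have he : (S.erase m).Nonempty := by rw [← Finset.card_pos, hec]; omega
  rw [descList_cons_max h]
  simpa using descList_getD_head he

private def wordOf (n : ℕ) (S : Finset ℕ) : List ℕ :=
  descList S ++ descList (Finset.Icc 1 n \ S)

private def c2 (n : ℕ) (S : Finset ℕ) : Prop :=
  (descList S).getD (S.card - 2) 0 < (descList (Finset.Icc 1 n \ S)).getD 0 0

private def c3 (n : ℕ) (S : Finset ℕ) : Prop :=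
  (descList S).getD (S.card - 1) 0 < (descList (Finset.Icc 1 n \ S)).getD 1 0

private instance (n : ℕ) (S : Finset ℕ) : Decidable (c2 n S) := by unfold c2; infer_instance
private instance (n : ℕ) (S : Finset ℕ) : Decidable (c3 n S) := by unfold c3; infer_instance

private def goodSets (n : ℕ) : Finset (Finset ℕ) :=
  (Finset.Icc 1 n).powerset.filter (fun S =>
    2 ≤ S.card ∧ S.card + 2 ≤ n ∧ c2 n S ∧ c3 n S)

private lemma mem_goodSets {n : ℕ} {S : Finset ℕ} :
    S ∈ goodSets n ↔ S ⊆ Finset.Icc 1 n ∧ 2 ≤ S.card ∧ S.card + 2 ≤ n ∧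
    (descList S).getD (S.card - 2) 0 < (descList (Finset.Icc 1 n \ S)).getD 0 0 ∧
    (descList S).getD (S.card - 1) 0 < (descList (Finset.Icc 1 n \ S)).getD 1 0 := by
  simp only [goodSets, Finset.mem_filter, Finset.mem_powerset, and_assoc]
  simp only [c2, c3]

private lemma card_sdiff_Icc {n : ℕ} {S : Finset ℕ} (hS : S ⊆ Finset.Icc 1 n) :
    (Finset.Icc 1 n \ S).card = n - S.card := by
  rw [Finset.card_sdiff_of_subset hS, Nat.card_Icc]
  omega

private lemma wordOf_isPermWord {n : ℕ} {S : Finset ℕ} (hS : S ⊆ Finset.Icc 1 n) :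
    IsPermWord n (wordOf n S) := by
  have hcS : S.card ≤ n := by
    have := Finset.card_le_card hS
    simpa [Nat.card_Icc] using this
  refine ⟨?_, ?_, ?_⟩
  · simp only [wordOf, List.length_append, descList_length, card_sdiff_Icc hS]
    omega
  · rw [wordOf, List.nodup_append]
    refine ⟨descList_nodup _, descList_nodup _, fun x hx y hx' hxy => ?_⟩
    subst hxy
    rw [mem_descList] at hx hx'
    exact (Finset.mem_sdiff.1 hx').2 hx
  · intro x hx
    rw [wordOf, List.mem_append, mem_descList, mem_descList] at hx
    rcases hx with hx | hx
    · simpa [Finset.mem_Icc] using hS hx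
    · have := (Finset.mem_sdiff.1 hx).1
      simpa [Finset.mem_Icc] using this


private lemma minimalPerms_eq_image {n : ℕ} (hn : 3 ≤ n) :
    minimalPerms (n-2) n = ↑((goodSets n).image (wordOf n)) := by
  ext w
  simp only [Finset.coe_image, Set.mem_image, Finset.mem_coe, minimalPerms, Set.mem_setOf_eq]
  constructor
  · rintro ⟨hperm, hmin⟩
    obtain ⟨a, ha2, han, htake, hdrop, hasc, hc2, hc3⟩ := structure_of_minimalPerm hn hperm hmin
    obtain ⟨hwl, hnd, hval⟩ := hperm
    set S := (w.take a).toFinset with hSdef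
    have hcS : S.card = a := by
      rw [hSdef, List.toFinset_card_of_nodup (hnd.sublist (List.take_sublist a w))]
      rw [List.length_take]; omega
    have hwto : w.toFinset = Finset.Icc 1 n := by
      refine Finset.eq_of_subset_of_card_le (fun x hx => ?_) ?_
      · rw [List.mem_toFinset] at hx
        simpa [Finset.mem_Icc] using hval x hx
      · rw [Nat.card_Icc, List.toFinset_card_of_nodup hnd, hwl]
        omega
    have hdisj : ∀ x ∈ w.take a, x ∈ w.drop a → False := by
      have := hnd
      rw [← List.take_append_drop a w, List.nodup_append] at this
      exact fun x hx hx' => this.2.2 x hx x hx' rfl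
    have hsd : Finset.Icc 1 n \ S = (w.drop a).toFinset := by
      ext x
      simp only [Finset.mem_sdiff, ← hwto, List.mem_toFinset, hSdef]
      constructor
      · rintro ⟨hx, hnx⟩
        rcases (List.mem_append.1 (by rwa [List.take_append_drop] : x ∈ w.take a ++ w.drop a))
          with h | h
        · exact absurd h hnx
        · exact h
      · intro hx
        refine ⟨?_, fun hx' => hdisj x hx' hx⟩
        rw [← List.take_append_drop a w, List.mem_append]
        exact Or.inr hx
    have hu : descList S = w.take a := by rw [hSdef]; exact descList_of_pairwise htake
    have hv : descList (Finset.Icc 1 n \ S) = w.drop a := by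
      rw [hsd]; exact descList_of_pairwise hdrop
    have hword : wordOf n S = w := by
      rw [wordOf, hu, hv, List.take_append_drop]
    refine ⟨S, ?_, hword⟩
    rw [mem_goodSets]
    have hSsub : S ⊆ Finset.Icc 1 n := by
      rw [← hwto, hSdef]
      intro x hx
      rw [List.mem_toFinset] at hx ⊢
      exact (List.take_sublist a w).mem hx
    refine ⟨hSsub, by omega, by omega, ?_, ?_⟩
    · rw [hu, hv, hcS, getD_take (by omega) (by omega), getD_drop (by omega : a + 0 < w.length)]
      simpa using hc2
    · rw [hu, hv, hcS, getD_take (by omega) (by omega), getD_drop (by omega : a + 1 < w.length)]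
      exact hc3
  · rintro ⟨S, hSg, rfl⟩
    rw [mem_goodSets] at hSg
    obtain ⟨hsub, hcard2, hcardn, hc2, hc3⟩ := hSg
    have hperm := wordOf_isPermWord hsub
    refine ⟨hperm, ?_⟩
    have hlv : (descList (Finset.Icc 1 n \ S)).length = n - S.card := by
      rw [descList_length, card_sdiff_Icc hsub]
    refine minimalPerm_of_structure hn (descList_pairwise _) (descList_pairwise _) ?_ ?_ ?_
      hperm ?_ ?_
    · rw [descList_length]; exact hcard2
    · rw [hlv]; omega
    · rw [descList_length, hlv]; omega
    · rw [descList_length]; exact hc2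
    · rw [descList_length]; exact hc3

private lemma wordOf_injOn {n : ℕ} (hn : 3 ≤ n) : Set.InjOn (wordOf n)
    ↑(goodSets n) := by
  intro S hS S' hS' heq
  rw [Finset.mem_coe, mem_goodSets] at hS hS'
  obtain ⟨hsub, hc2, hcn, hj2, hj3⟩ := hS
  obtain ⟨hsub', hc2', hcn', hj2', hj3'⟩ := hS'
  -- the ascent position is determined by the descent set
  have hasc : ∀ (T : Finset ℕ), T ⊆ Finset.Icc 1 n → 2 ≤ T.card → T.card + 2 ≤ n →
      (descList T).getD (T.card - 2) 0 < (descList (Finset.Icc 1 n \ T)).getD 0 0 →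
      descents (wordOf n T) = (Finset.Icc 1 (n - 1)).erase T.card := by
    intro T hTsub hT2 hTn hTj
    have hlv : (descList (Finset.Icc 1 n \ T)).length = n - T.card := by
      rw [descList_length, card_sdiff_Icc hTsub]
    have := descents_two_run (descList_pairwise T) (descList_pairwise (Finset.Icc 1 n \ T))
      (by rw [descList_length]; omega) (by rw [hlv]; omega)
      (by
        rw [descList_length]
        refine lt_trans (pairwise_gt_getD (descList_pairwise T)
          (show T.card - 2 < T.card - 1 by omega) (by rw [descList_length]; omega)) ?_
        · exact hTj)
    rw [descList_length, hlv] at this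
    rw [show T.card + (n - T.card) - 1 = n - 1 by omega] at this
    rw [wordOf, this]
  have h1 := hasc S hsub hc2 hcn hj2
  have h2 := hasc S' hsub' hc2' hcn' hj2'
  rw [heq, h2] at h1
  have hcc : S'.card = S.card := by
    by_contra hne
    have hmem : S.card ∈ (Finset.Icc 1 (n-1)).erase S'.card := by
      simp only [Finset.mem_erase, Finset.mem_Icc]
      omega
    rw [h1, Finset.mem_erase] at hmem
    exact hmem.1 rfl
  have htake := congrArg (List.take S.card) heq
  rw [wordOf, wordOf, List.take_left' (descList_length S)] at htake
  rw [show S.card = S'.card from hcc.symm, List.take_left' (descList_length S')] at htake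
  have := congrArg List.toFinset htake
  rwa [descList_toFinset, descList_toFinset] at this

private lemma min'_congr {A B : Finset ℕ} (h : A = B) (hA : A.Nonempty) (hB : B.Nonempty) :
    A.min' hA = B.min' hB := by subst h; rfl

private lemma max'_congr {A B : Finset ℕ} (h : A = B) (hA : A.Nonempty) (hB : B.Nonempty) :
    A.max' hA = B.max' hB := by subst h; rfl

section conds
variable {n : ℕ} {S : Finset ℕ}

private lemma T_card (hsub : S ⊆ Finset.Icc 1 n) (hn2 : S.card + 2 ≤ n) :
    2 ≤ (Finset.Icc 1 n \ S).card := by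
  rw [card_sdiff_Icc hsub]; omega

private lemma S_ne (h2 : 2 ≤ S.card) : S.Nonempty := Finset.card_pos.1 (by omega)

private lemma Se_ne (h2 : 2 ≤ S.card) : (S.erase (S.min' (S_ne h2))).Nonempty := by
  rw [← Finset.card_pos, Finset.card_erase_of_mem (Finset.min'_mem _ _)]; omega

private lemma Te_ne {T : Finset ℕ} (h2 : 2 ≤ T.card) : (T.erase (T.max' (S_ne h2))).Nonempty := by
  rw [← Finset.card_pos, Finset.card_erase_of_mem (Finset.max'_mem _ _)]; omega

private lemma c2_iff (hsub : S ⊆ Finset.Icc 1 n) (h2 : 2 ≤ S.card) (hn2 : S.card + 2 ≤ n) :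
    c2 n S ↔ (S.erase (S.min' (S_ne h2))).min' (Se_ne h2) <
      (Finset.Icc 1 n \ S).max' (S_ne (T_card hsub hn2)) := by
  rw [c2, descList_getD_secondlast h2, descList_getD_head (S_ne (T_card hsub hn2))]

private lemma c3_iff (hsub : S ⊆ Finset.Icc 1 n) (h2 : 2 ≤ S.card) (hn2 : S.card + 2 ≤ n) :
    c3 n S ↔ S.min' (S_ne h2) < ((Finset.Icc 1 n \ S).erase
      ((Finset.Icc 1 n \ S).max' (S_ne (T_card hsub hn2)))).max' (Te_ne (T_card hsub hn2)) := by
  rw [c3, descList_getD_last (S_ne h2), descList_getD_second (T_card hsub hn2)]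

private lemma not_c2_iff (hsub : S ⊆ Finset.Icc 1 n) (h2 : 2 ≤ S.card) (hn2 : S.card + 2 ≤ n) :
    ¬ c2 n S ↔ ∀ y ∈ Finset.Icc 1 n \ S, y < (S.erase (S.min' (S_ne h2))).min' (Se_ne h2) := by
  rw [c2_iff hsub h2 hn2, not_lt, ← Finset.max'_lt_iff (H := S_ne (T_card hsub hn2))]
  set T := Finset.Icc 1 n \ S
  have hne : T.max' (S_ne (T_card hsub hn2)) ≠ (S.erase (S.min' (S_ne h2))).min' (Se_ne h2) := by
    intro h
    have h1 : T.max' (S_ne (T_card hsub hn2)) ∈ T := Finset.max'_mem _ _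
    have h2' : (S.erase (S.min' (S_ne h2))).min' (Se_ne h2) ∈ S :=
      Finset.mem_of_mem_erase (Finset.min'_mem _ _)
    rw [h] at h1
    exact (Finset.mem_sdiff.1 h1).2 h2'
  exact ⟨fun h => lt_of_le_of_ne h hne, le_of_lt⟩

private lemma not_c3_iff (hsub : S ⊆ Finset.Icc 1 n) (h2 : 2 ≤ S.card) (hn2 : S.card + 2 ≤ n) :
    ¬ c3 n S ↔ ∀ y ∈ (Finset.Icc 1 n \ S).erase
      ((Finset.Icc 1 n \ S).max' (S_ne (T_card hsub hn2))), y < S.min' (S_ne h2) := by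
  rw [c3_iff hsub h2 hn2, not_lt, ← Finset.max'_lt_iff (H := Te_ne (T_card hsub hn2))]
  set T := Finset.Icc 1 n \ S
  have hne : (T.erase (T.max' (S_ne (T_card hsub hn2)))).max' (Te_ne (T_card hsub hn2)) ≠
      S.min' (S_ne h2) := by
    intro h
    have h1 : (T.erase (T.max' (S_ne (T_card hsub hn2)))).max' (Te_ne (T_card hsub hn2)) ∈ T :=
      Finset.mem_of_mem_erase (Finset.max'_mem _ _)
    have h2' : S.min' (S_ne h2) ∈ S := Finset.min'_mem _ _
    rw [h] at h1
    exact (Finset.mem_sdiff.1 h1).2 h2'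
  exact ⟨fun h => lt_of_le_of_ne h hne, le_of_lt⟩

end conds

private lemma min'_Icc {a b : ℕ} (h : a ≤ b) : (Finset.Icc a b).min' ⟨a, by simp [h]⟩ = a := by
  refine le_antisymm (Finset.min'_le _ _ (by simp [h])) (Finset.le_min' _ _ _ ?_)
  intro y hy
  exact (Finset.mem_Icc.1 hy).1

private lemma B2_eq {n : ℕ} (hn : 3 ≤ n) :
    (Finset.Icc 1 n).powerset.filter (fun S => 2 ≤ S.card ∧ S.card + 2 ≤ n ∧ ¬ c2 n S)
    = ((Finset.Icc 4 n).sigma (fun t => Finset.Icc 1 (t-1))).image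
        (fun p => insert p.2 (Finset.Icc p.1 n)) := by
  ext S
  simp only [Finset.mem_filter, Finset.mem_powerset, Finset.mem_image, Finset.mem_sigma]
  constructor
  · rintro ⟨hsub, h2, hn2, hnc2⟩
    rw [not_c2_iff hsub h2 hn2] at hnc2
    set x := S.min' (S_ne h2) with hxdef
    set m2 := (S.erase x).min' (Se_ne h2) with hm2def
    have hxS : x ∈ S := Finset.min'_mem _ _
    have hm2S : m2 ∈ S := Finset.mem_of_mem_erase (Finset.min'_mem _ _)
    have hxm2 : x < m2 := by
      have h1 : x ≤ m2 := Finset.min'_le _ _ hm2S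
      have h2' : m2 ≠ x := (Finset.mem_erase.1 (Finset.min'_mem _ (Se_ne h2))).1
      omega
    have hm2n : m2 ≤ n := (Finset.mem_Icc.1 (hsub hm2S)).2
    have hx1 : 1 ≤ x := (Finset.mem_Icc.1 (hsub hxS)).1
    have hset : S = insert x (Finset.Icc m2 n) := by
      ext y
      simp only [Finset.mem_insert, Finset.mem_Icc]
      constructor
      · intro hy
        rcases eq_or_ne y x with rfl | hne
        · exact Or.inl rfl
        · refine Or.inr ⟨Finset.min'_le _ _ (Finset.mem_erase.2 ⟨hne, hy⟩), ?_⟩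
          exact (Finset.mem_Icc.1 (hsub hy)).2
      · rintro (rfl | ⟨hy1, hy2⟩)
        · exact hxS
        · by_contra hyS
          have hyT : y ∈ Finset.Icc 1 n \ S := by
            simp only [Finset.mem_sdiff, Finset.mem_Icc]
            exact ⟨⟨by omega, hy2⟩, hyS⟩
          have := hnc2 y hyT
          omega
    have hcard : S.card = n - m2 + 2 := by
      rw [hset, Finset.card_insert_of_notMem (by simp [Finset.mem_Icc]; omega), Nat.card_Icc]
      omega
    refine ⟨⟨m2, x⟩, ⟨?_, ?_⟩, hset.symm⟩
    · simp only [Finset.mem_Icc]; omega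
    · simp only [Finset.mem_Icc]; omega
  · rintro ⟨⟨t, x⟩, ⟨ht, hx⟩, rfl⟩
    simp only [Finset.mem_Icc] at ht hx
    have hxt : x ∉ Finset.Icc t n := by simp [Finset.mem_Icc]; omega
    have hsub : insert x (Finset.Icc t n) ⊆ Finset.Icc 1 n := by
      intro y hy
      rcases Finset.mem_insert.1 hy with rfl | hy
      · simp [Finset.mem_Icc]; omega
      · simp only [Finset.mem_Icc] at hy ⊢; omega
    have hcard : (insert x (Finset.Icc t n)).card = n - t + 2 := by
      rw [Finset.card_insert_of_notMem hxt, Nat.card_Icc]; omega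
    have h2 : 2 ≤ (insert x (Finset.Icc t n)).card := by omega
    have hn2 : (insert x (Finset.Icc t n)).card + 2 ≤ n := by omega
    refine ⟨hsub, h2, hn2, ?_⟩
    rw [not_c2_iff hsub h2 hn2]
    have hmin : (insert x (Finset.Icc t n)).min' (S_ne h2) = x := by
      refine le_antisymm (Finset.min'_le _ _ (Finset.mem_insert_self _ _)) ?_
      refine Finset.le_min' _ _ _ (fun y hy => ?_)
      rcases Finset.mem_insert.1 hy with rfl | hy
      · exact le_refl _
      · have := (Finset.mem_Icc.1 hy).1; omega
    have herase : (insert x (Finset.Icc t n)).erase ((insert x (Finset.Icc t n)).min' (S_ne h2))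
        = Finset.Icc t n := by
      rw [hmin, Finset.erase_insert hxt]
    have hm2 : ((insert x (Finset.Icc t n)).erase
        ((insert x (Finset.Icc t n)).min' (S_ne h2))).min' (Se_ne h2) = t := by
      rw [min'_congr herase (Se_ne h2) ⟨t, by simp [Finset.mem_Icc]; omega⟩]
      exact min'_Icc (by omega)
    intro y hy
    rw [hm2]
    simp only [Finset.mem_sdiff, Finset.mem_insert, Finset.mem_Icc, not_or, not_and] at hy
    omega

private lemma max'_Icc {a b : ℕ} (h : a ≤ b) : (Finset.Icc a b).max' ⟨a, by simp [h]⟩ = b := by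
  refine le_antisymm (Finset.max'_le _ _ _ ?_) (Finset.le_max' _ _ (by simp [h]))
  intro y hy
  exact (Finset.mem_Icc.1 hy).2

private lemma B3_eq {n : ℕ} (hn : 3 ≤ n) :
    (Finset.Icc 1 n).powerset.filter
      (fun S => 2 ≤ S.card ∧ S.card + 2 ≤ n ∧ c2 n S ∧ ¬ c3 n S)
    = ((Finset.Icc 2 (n-2)).sigma (fun x => Finset.Icc (x+2) n)).image
        (fun p => (Finset.Icc p.1 n).erase p.2) := by
  ext S
  simp only [Finset.mem_filter, Finset.mem_powerset, Finset.mem_image, Finset.mem_sigma]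
  constructor
  · rintro ⟨hsub, h2, hn2, hc2, hnc3⟩
    rw [not_c3_iff hsub h2 hn2] at hnc3
    rw [c2_iff hsub h2 hn2] at hc2
    have hMx2' : S.min' (S_ne h2) + 2 ≤ (Finset.Icc 1 n \ S).max' (S_ne (T_card hsub hn2)) := by
      have h1 : S.min' (S_ne h2) ≤ (S.erase (S.min' (S_ne h2))).min' (Se_ne h2) :=
        Finset.min'_le _ _ (Finset.mem_of_mem_erase (Finset.min'_mem _ _))
      have hne' : (S.erase (S.min' (S_ne h2))).min' (Se_ne h2) ≠ S.min' (S_ne h2) :=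
        (Finset.mem_erase.1 (Finset.min'_mem _ _)).1
      omega
    set T := Finset.Icc 1 n \ S with hTdef
    set x := S.min' (S_ne h2) with hxdef
    set M := T.max' (S_ne (T_card hsub hn2)) with hMdef
    have hxS : x ∈ S := Finset.min'_mem _ _
    have hMT : M ∈ T := Finset.max'_mem _ _
    have hMn : M ≤ n := (Finset.mem_Icc.1 (Finset.mem_sdiff.1 hMT).1).2
    have hx1 : 1 ≤ x := (Finset.mem_Icc.1 (hsub hxS)).1
    have hMx2 : x + 2 ≤ M := hMx2'
    -- the second max of T is < x
    have hsm : (T.erase M).Nonempty := Te_ne (T_card hsub hn2)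
    have hsmx : ∀ y ∈ T.erase M, y < x := hnc3
    have hset : S = (Finset.Icc x n).erase M := by
      ext y
      simp only [Finset.mem_erase, Finset.mem_Icc]
      constructor
      · intro hy
        refine ⟨fun hyM => (Finset.mem_sdiff.1 hMT).2 (hyM ▸ hy), Finset.min'_le _ _ hy,
          (Finset.mem_Icc.1 (hsub hy)).2⟩
      · rintro ⟨hyM, hy1, hy2⟩
        by_contra hyS
        have hyT : y ∈ T := by
          simp only [hTdef, Finset.mem_sdiff, Finset.mem_Icc]
          exact ⟨⟨by omega, hy2⟩, hyS⟩
        have := hsmx y (Finset.mem_erase.2 ⟨hyM, hyT⟩)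
        omega
    have hMmem : M ∈ Finset.Icc x n := by simp [Finset.mem_Icc]; omega
    have hcard : S.card = n - x := by
      rw [hset, Finset.card_erase_of_mem hMmem, Nat.card_Icc]; omega
    -- x ≥ 2 since second max of T exists and is ≥ 1, < x
    have hx2 : 2 ≤ x := by
      obtain ⟨y, hy⟩ := hsm
      have hy1 : 1 ≤ y :=
        (Finset.mem_Icc.1 (Finset.mem_sdiff.1 (Finset.mem_of_mem_erase hy)).1).1
      have := hsmx y hy
      omega
    refine ⟨⟨x, M⟩, ⟨?_, ?_⟩, hset.symm⟩
    · simp only [Finset.mem_Icc]; omega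
    · simp only [Finset.mem_Icc]; omega
  · rintro ⟨⟨x, M⟩, ⟨hx, hM⟩, rfl⟩
    simp only [Finset.mem_Icc] at hx hM
    set S := (Finset.Icc x n).erase M with hSdef
    have hMmem : M ∈ Finset.Icc x n := by simp [Finset.mem_Icc]; omega
    have hsub : S ⊆ Finset.Icc 1 n := by
      intro y hy
      have := Finset.mem_Icc.1 (Finset.mem_of_mem_erase hy)
      simp only [Finset.mem_Icc]
      omega
    have hcard : S.card = n - x := by
      rw [hSdef, Finset.card_erase_of_mem hMmem, Nat.card_Icc]; omega
    have h2 : 2 ≤ S.card := by omega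
    have hn2 : S.card + 2 ≤ n := by omega
    have hxS : x ∈ S := by
      simp only [hSdef, Finset.mem_erase, Finset.mem_Icc]
      refine ⟨by omega, le_refl _, by omega⟩
    have hmin : S.min' (S_ne h2) = x := by
      refine le_antisymm (Finset.min'_le _ _ hxS) (Finset.le_min' _ _ _ (fun y hy => ?_))
      exact (Finset.mem_Icc.1 (Finset.mem_of_mem_erase hy)).1
    have hT : Finset.Icc 1 n \ S = insert M (Finset.Icc 1 (x-1)) := by
      ext y
      simp only [hSdef, Finset.mem_sdiff, Finset.mem_erase, Finset.mem_Icc, Finset.mem_insert,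
        not_and, not_le]
      constructor
      · rintro ⟨⟨hy1, hy2⟩, hy3⟩
        rcases eq_or_ne y M with rfl | hne
        · exact Or.inl rfl
        · have := hy3 hne
          refine Or.inr ⟨hy1, by omega⟩
      · rintro (rfl | ⟨hy1, hy2⟩)
        · exact ⟨⟨by omega, by omega⟩, fun hne => absurd rfl hne⟩
        · exact ⟨⟨hy1, by omega⟩, fun hne h1 => by omega⟩
    have hTne : (Finset.Icc 1 n \ S).Nonempty := S_ne (T_card hsub hn2)
    have hmax : (Finset.Icc 1 n \ S).max' hTne = M := by
      rw [max'_congr hT hTne ⟨M, Finset.mem_insert_self _ _⟩]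
      refine le_antisymm (Finset.max'_le _ _ _ (fun y hy => ?_))
        (Finset.le_max' _ _ (Finset.mem_insert_self _ _))
      rcases Finset.mem_insert.1 hy with rfl | hy
      · exact le_refl _
      · have := (Finset.mem_Icc.1 hy).2; omega
    refine ⟨hsub, h2, hn2, ?_, ?_⟩
    · rw [c2_iff hsub h2 hn2]
      have herase : S.erase (S.min' (S_ne h2)) = (Finset.Icc (x+1) n).erase M := by
        rw [hmin, hSdef, Finset.erase_right_comm]
        congr 1
        ext y
        simp only [Finset.mem_erase, Finset.mem_Icc]
        omega
      have hm2 : (S.erase (S.min' (S_ne h2))).min' (Se_ne h2) = x + 1 := by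
        rw [min'_congr herase (Se_ne h2) ⟨x+1, by simp [Finset.mem_erase, Finset.mem_Icc]; omega⟩]
        refine le_antisymm (Finset.min'_le _ _ (by simp [Finset.mem_erase, Finset.mem_Icc]; omega))
          (Finset.le_min' _ _ _ (fun y hy => ?_))
        exact (Finset.mem_Icc.1 (Finset.mem_of_mem_erase hy)).1
      rw [hm2, hmax]
      omega
    · rw [not_c3_iff hsub h2 hn2]
      intro y hy
      rw [hmin]
      rw [hmax, hT, Finset.erase_insert (by simp [Finset.mem_Icc]; omega)] at hy
      have := (Finset.mem_Icc.1 hy).2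
      omega

private lemma card_B2 {n : ℕ} (hn : 3 ≤ n) :
    ((Finset.Icc 1 n).powerset.filter
      (fun S => 2 ≤ S.card ∧ S.card + 2 ≤ n ∧ ¬ c2 n S)).card
    = ∑ t ∈ Finset.Icc 4 n, (t - 1) := by
  rw [B2_eq hn, Finset.card_image_of_injOn, Finset.card_sigma]
  · refine Finset.sum_congr rfl (fun t ht => ?_)
    rw [Nat.card_Icc]
    omega
  · rintro ⟨t, x⟩ hp ⟨t', x'⟩ hp' heq
    simp only [Finset.coe_sigma, Set.mem_sigma_iff, Finset.mem_coe, Finset.mem_Icc] at hp hp'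
    simp only at heq
    have hxt : x ∉ Finset.Icc t n := by simp [Finset.mem_Icc]; omega
    have hxt' : x' ∉ Finset.Icc t' n := by simp [Finset.mem_Icc]; omega
    have hmin : ∀ (a b : ℕ), 1 ≤ a → a + 1 ≤ b → b ≤ n →
        (insert a (Finset.Icc b n)).min' ⟨a, Finset.mem_insert_self _ _⟩ = a := by
      intro a b ha hab hbn
      refine le_antisymm (Finset.min'_le _ _ (Finset.mem_insert_self _ _))
        (Finset.le_min' _ _ _ (fun y hy => ?_))
      rcases Finset.mem_insert.1 hy with rfl | hy
      · exact le_refl _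
      · have := (Finset.mem_Icc.1 hy).1; omega
    have hxx : x = x' := by
      have h1 := hmin x t hp.2.1 (by omega) hp.1.2
      have h2 := hmin x' t' hp'.2.1 (by omega) hp'.1.2
      rw [← h1, ← h2]
      exact min'_congr heq _ _
    subst hxx
    have hcard : (insert x (Finset.Icc t n)).card = (insert x (Finset.Icc t' n)).card := by
      rw [heq]
    rw [Finset.card_insert_of_notMem hxt, Finset.card_insert_of_notMem hxt',
      Nat.card_Icc, Nat.card_Icc] at hcard
    have htt : t = t' := by omega
    subst htt
    rfl

private lemma card_B3 {n : ℕ} (hn : 3 ≤ n) :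
    ((Finset.Icc 1 n).powerset.filter
      (fun S => 2 ≤ S.card ∧ S.card + 2 ≤ n ∧ c2 n S ∧ ¬ c3 n S)).card
    = ∑ x ∈ Finset.Icc 2 (n-2), (n - x - 1) := by
  rw [B3_eq hn, Finset.card_image_of_injOn, Finset.card_sigma]
  · refine Finset.sum_congr rfl (fun x hx => ?_)
    simp only [Finset.mem_Icc] at hx
    rw [Nat.card_Icc]
    omega
  · rintro ⟨x, M⟩ hp ⟨x', M'⟩ hp' heq
    simp only [Finset.coe_sigma, Set.mem_sigma_iff, Finset.mem_coe, Finset.mem_Icc] at hp hp'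
    simp only at heq
    have hmem : ∀ (a b : ℕ), 2 ≤ a → a + 2 ≤ b → b ≤ n → a ∈ (Finset.Icc a n).erase b := by
      intro a b ha hab hbn
      simp only [Finset.mem_erase, Finset.mem_Icc]
      exact ⟨by omega, le_refl _, by omega⟩
    have hmin : ∀ (a b : ℕ) (ha : 2 ≤ a) (hab : a + 2 ≤ b) (hbn : b ≤ n),
        ((Finset.Icc a n).erase b).min' ⟨a, hmem a b ha hab hbn⟩ = a := by
      intro a b ha hab hbn
      refine le_antisymm (Finset.min'_le _ _ (hmem a b ha hab hbn))
        (Finset.le_min' _ _ _ (fun y hy => ?_))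
      exact (Finset.mem_Icc.1 (Finset.mem_of_mem_erase hy)).1
    have hxx : x = x' := by
      have h1 := hmin x M hp.1.1 hp.2.1 hp.2.2
      have h2 := hmin x' M' hp'.1.1 hp'.2.1 hp'.2.2
      rw [← h1, ← h2]
      exact min'_congr heq _ _
    subst hxx
    have hMM : M = M' := by
      by_contra hne
      have h1 : M' ∈ (Finset.Icc x n).erase M := by
        simp only [Finset.mem_erase, Finset.mem_Icc]
        exact ⟨fun h => hne h.symm, by omega, hp'.2.2⟩
      rw [heq] at h1
      exact (Finset.mem_erase.1 h1).1 rfl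
    subst hMM
    rfl

private lemma card_B0 {n : ℕ} (hn : 3 ≤ n) :
    ((Finset.Icc 1 n).powerset.filter (fun S => S.card ≤ 1)).card = n + 1 := by
  have heq : (Finset.Icc 1 n).powerset.filter (fun S => S.card ≤ 1)
      = insert ∅ ((Finset.Icc 1 n).image (fun a => ({a} : Finset ℕ))) := by
    ext S
    simp only [Finset.mem_filter, Finset.mem_powerset, Finset.mem_insert, Finset.mem_image]
    constructor
    · rintro ⟨hsub, hc⟩
      interval_cases h : S.card
      · exact Or.inl (Finset.card_eq_zero.1 h)
      · obtain ⟨a, rfl⟩ := Finset.card_eq_one.1 h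
        exact Or.inr ⟨a, hsub (Finset.mem_singleton_self a), rfl⟩
    · rintro (rfl | ⟨a, ha, rfl⟩)
      · simp
      · refine ⟨by simpa using ha, by simp⟩
  have hnm : ∅ ∉ (Finset.Icc 1 n).image (fun a => ({a} : Finset ℕ)) := by
    simp only [Finset.mem_image]
    rintro ⟨a, -, ha⟩
    exact Finset.singleton_ne_empty a ha
  have hinj : Set.InjOn (fun a => ({a} : Finset ℕ)) ↑(Finset.Icc 1 n) := by
    intro a _ b _ hab
    simpa using hab
  rw [heq, Finset.card_insert_of_notMem hnm, Finset.card_image_of_injOn hinj, Nat.card_Icc]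
  omega

private lemma card_B1 {n : ℕ} (hn : 3 ≤ n) :
    ((Finset.Icc 1 n).powerset.filter (fun S => n - 1 ≤ S.card)).card = n + 1 := by
  have heq : (Finset.Icc 1 n).powerset.filter (fun S => n - 1 ≤ S.card)
      = insert (Finset.Icc 1 n) ((Finset.Icc 1 n).image
          (fun a => (Finset.Icc 1 n).erase a)) := by
    ext S
    simp only [Finset.mem_filter, Finset.mem_powerset, Finset.mem_insert, Finset.mem_image]
    constructor
    · rintro ⟨hsub, hc⟩
      have hle : S.card ≤ n := by
        have := Finset.card_le_card hsub
        rwa [Nat.card_Icc] at this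
      rcases eq_or_lt_of_le hle with h | h
      · exact Or.inl (Finset.eq_of_subset_of_card_le hsub (by rw [Nat.card_Icc]; omega))
      · have hcd : (Finset.Icc 1 n \ S).card = 1 := by
          rw [Finset.card_sdiff_of_subset hsub, Nat.card_Icc]; omega
        obtain ⟨a, ha⟩ := Finset.card_eq_one.1 hcd
        have haT : a ∈ Finset.Icc 1 n \ S := ha ▸ Finset.mem_singleton_self a
        have haI : a ∈ Finset.Icc 1 n := (Finset.mem_sdiff.1 haT).1
        have haS : a ∉ S := (Finset.mem_sdiff.1 haT).2
        refine Or.inr ⟨a, haI, ?_⟩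
        ext y
        simp only [Finset.mem_erase]
        constructor
        · rintro ⟨hya, hyI⟩
          by_contra hyS
          have : y ∈ Finset.Icc 1 n \ S := Finset.mem_sdiff.2 ⟨hyI, hyS⟩
          rw [ha] at this
          exact hya (Finset.mem_singleton.1 this)
        · intro hyS
          refine ⟨fun h => haS (h ▸ hyS), hsub hyS⟩
    · rintro (rfl | ⟨a, ha, rfl⟩)
      · refine ⟨le_refl _, by rw [Nat.card_Icc]; omega⟩
      · refine ⟨Finset.erase_subset _ _, ?_⟩
        rw [Finset.card_erase_of_mem ha, Nat.card_Icc]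
        omega
  have hnm : Finset.Icc 1 n ∉ (Finset.Icc 1 n).image (fun a => (Finset.Icc 1 n).erase a) := by
    simp only [Finset.mem_image]
    rintro ⟨a, haI, ha⟩
    have h1 := congrArg Finset.card ha
    rw [Finset.card_erase_of_mem (by simpa using haI), Nat.card_Icc] at h1
    omega
  have hinj : Set.InjOn (fun a => (Finset.Icc 1 n).erase a) ↑(Finset.Icc 1 n) := by
    intro a haI b hbI hab
    simp only [Finset.mem_coe] at haI hbI
    by_contra hne
    have hmem : b ∈ (Finset.Icc 1 n).erase a := Finset.mem_erase.2 ⟨fun h => hne h.symm, hbI⟩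
    have hab' : (Finset.Icc 1 n).erase a = (Finset.Icc 1 n).erase b := hab
    rw [hab'] at hmem
    exact (Finset.mem_erase.1 hmem).1 rfl
  rw [heq, Finset.card_insert_of_notMem hnm, Finset.card_image_of_injOn hinj, Nat.card_Icc]
  omega

private lemma gauss1 : ∀ n, 3 ≤ n → 2 * (∑ t ∈ Finset.Icc 4 n, (t-1)) + 6 + n = n * n := by
  intro n hn
  induction n, hn using Nat.le_induction with
  | base =>
    rw [show (4 : ℕ) = 3 + 1 from rfl, Finset.Icc_eq_empty (by omega)]
    simp
  | succ n hn ih =>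
    rw [Finset.sum_Icc_succ_top (by omega), show n + 1 - 1 = n by omega]
    have e : (n+1) * (n+1) = n * n + 2*n + 1 := by ring
    rw [e]
    linarith [ih]

private lemma gauss2 : ∀ n, 3 ≤ n → 2 * (∑ x ∈ Finset.Icc 2 (n-2), (n - x - 1)) + 5 * n
    = n * n + 6 := by
  intro n hn
  induction n, hn using Nat.le_induction with
  | base =>
    rw [show (3:ℕ) - 2 = 1 from rfl, Finset.Icc_eq_empty (by omega)]
    simp
  | succ n hn ih =>
    have h1 : (n+1) - 2 = (n-2) + 1 := by omega
    rw [h1, Finset.sum_Icc_succ_top (by omega)]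
    have hc : ∀ x ∈ Finset.Icc 2 (n-2), n + 1 - x - 1 = (n - x - 1) + 1 := by
      intro x hx
      simp only [Finset.mem_Icc] at hx
      omega
    rw [Finset.sum_congr rfl hc, Finset.sum_add_distrib, Finset.sum_const, smul_eq_mul,
      Nat.card_Icc, show n + 1 - ((n-2)+1) - 1 = 1 by omega]
    have e : (n+1) * (n+1) = n * n + 2*n + 1 := by ring
    rw [e]
    have e2 : n - 2 + 1 - 2 + 2 = n - 1 := by omega
    have e3 : n - 1 + 1 = n := by omega
    linarith [ih]

private lemma card_goodSets {n : ℕ} (hn : 3 ≤ n) :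
    2 * (goodSets n).card + 2 * (n * n) + 4 = 2 * 2 ^ n + 2 * n := by
  classical
  set U := (Finset.Icc 1 n).powerset with hU
  set P : Finset ℕ → Prop := fun S => 2 ≤ S.card ∧ S.card + 2 ≤ n ∧ c2 n S ∧ c3 n S with hP
  have hsplit : (U.filter P).card + (U.filter (fun S => ¬ P S)).card = 2 ^ n := by
    rw [Finset.card_filter_add_card_filter_not, hU, Finset.card_powerset, Nat.card_Icc,
      show n + 1 - 1 = n by omega]
  set B0 := U.filter (fun S => S.card ≤ 1) with hB0
  set B1 := U.filter (fun S => n - 1 ≤ S.card) with hB1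
  set B2 := U.filter (fun S => 2 ≤ S.card ∧ S.card + 2 ≤ n ∧ ¬ c2 n S) with hB2
  set B3 := U.filter (fun S => 2 ≤ S.card ∧ S.card + 2 ≤ n ∧ c2 n S ∧ ¬ c3 n S) with hB3
  have hBadeq : U.filter (fun S => ¬ P S) = ((B0 ∪ B1) ∪ B2) ∪ B3 := by
    ext S
    simp only [hB0, hB1, hB2, hB3, hP, Finset.mem_union, Finset.mem_filter]
    constructor
    · rintro ⟨hSU, hnP⟩
      rcases le_or_gt S.card 1 with hc | hc
      · exact Or.inl (Or.inl (Or.inl ⟨hSU, hc⟩))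
      rcases le_or_gt (n-1) S.card with hc' | hc'
      · exact Or.inl (Or.inl (Or.inr ⟨hSU, hc'⟩))
      by_cases h2 : c2 n S
      · refine Or.inr ⟨hSU, by omega, by omega, h2, ?_⟩
        intro h3
        exact hnP ⟨by omega, by omega, h2, h3⟩
      · exact Or.inl (Or.inr ⟨hSU, by omega, by omega, h2⟩)
    · rintro ((((⟨hSU, hc⟩ | ⟨hSU, hc⟩)) | ⟨hSU, hc, hc', hc2⟩) | ⟨hSU, hc, hc', hc2, hc3⟩)
      · exact ⟨hSU, fun hP' => by omega⟩
      · exact ⟨hSU, fun hP' => by omega⟩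
      · exact ⟨hSU, fun hP' => hc2 hP'.2.2.1⟩
      · exact ⟨hSU, fun hP' => hc3 hP'.2.2.2⟩
  have d01 : Disjoint B0 B1 := by
    rw [Finset.disjoint_left]
    intro S hS hS'
    simp only [hB0, hB1, Finset.mem_filter] at hS hS'
    omega
  have d012 : Disjoint (B0 ∪ B1) B2 := by
    rw [Finset.disjoint_left]
    intro S hS hS'
    simp only [hB0, hB1, hB2, Finset.mem_union, Finset.mem_filter] at hS hS'
    rcases hS with h | h <;> omega
  have d0123 : Disjoint ((B0 ∪ B1) ∪ B2) B3 := by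
    rw [Finset.disjoint_left]
    intro S hS hS'
    simp only [hB0, hB1, hB2, hB3, Finset.mem_union, Finset.mem_filter] at hS hS'
    rcases hS with (h | h) | h
    · omega
    · omega
    · exact h.2.2.2 hS'.2.2.2.1
  have hcard : (U.filter (fun S => ¬ P S)).card = B0.card + B1.card + B2.card + B3.card := by
    rw [hBadeq, Finset.card_union_of_disjoint d0123, Finset.card_union_of_disjoint d012,
      Finset.card_union_of_disjoint d01]
  have hc0 : B0.card = n + 1 := card_B0 hn
  have hc1 : B1.card = n + 1 := card_B1 hn
  have hc2' : B2.card = ∑ t ∈ Finset.Icc 4 n, (t - 1) := card_B2 hn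
  have hc3' : B3.card = ∑ x ∈ Finset.Icc 2 (n-2), (n - x - 1) := card_B3 hn
  have hg1 := gauss1 n hn
  have hg2 := gauss2 n hn
  have hgood : (goodSets n).card = (U.filter P).card := rfl
  rw [hgood]
  linarith [hsplit, hcard, hc0, hc1, hc2', hc3', hg1, hg2]



/-- for `n ≥ 3`, `f_{n-2}(n) = 2^n - n(n-1) - 2`. -/
theorem fCount_n_sub_two (n : ℕ) (hn : 3 ≤ n) :
    (fCount (n - 2) n : ℤ) = 2 ^ n - (n : ℤ) * ((n : ℤ) - 1) - 2 := by
  have h1 : fCount (n-2) n = (goodSets n).card := by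
    rw [fCount, minimalPerms_eq_image hn, Set.ncard_coe_finset,
      Finset.card_image_of_injOn (wordOf_injOn hn)]
  have h2 := card_goodSets hn
  have h2' : 2 * ((goodSets n).card : ℤ) + 2 * ((n:ℤ) * (n:ℤ)) + 4
      = 2 * 2 ^ n + 2 * (n:ℤ) := by exact_mod_cast h2
  rw [h1]
  have h3 : (n:ℤ) * ((n:ℤ) - 1) = (n:ℤ) * (n:ℤ) - (n:ℤ) := by ring
  rw [h3]
  linarith [h2']
end

section
/- Every minimal permutation of length 2n+1 with n+1 descents has exactly one occurrence of two consecutive descents, namely the descents 2i−1 and 2i for a unique 1 ≤ i ≤ n, and all its other descents are separated by ascents; equivalently, its ascent sequence is (2,…,2,3,2,…,2) with the entry 3 in position i. Hence 𝓕_{n+1}(2n+1) is the disjoint union of the sets 𝓜_{2n+1,2i} for 1 ≤ i ≤ n. -/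
def descCount : List ℕ → ℕ
  | x :: y :: t => (if y < x then 1 else 0) + descCount (y :: t)
  | _ => 0

theorem descentAt_cons_succ (x : ℕ) (l : List ℕ) (i : ℕ) (hi : 1 ≤ i) :
    DescentAt (x :: l) (i + 1) ↔ DescentAt l i := by
  obtain ⟨j, rfl⟩ : ∃ j, i = j + 1 := ⟨i - 1, by omega⟩
  unfold DescentAt
  simp only [List.getD_cons_succ, List.length_cons, Nat.add_sub_cancel]
  constructor <;> rintro ⟨h1, h2, h3⟩ <;> exact ⟨by omega, by omega, h3⟩

theorem descents_cons (x y : ℕ) (t : List ℕ) :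
    descents (x :: y :: t) =
      (if y < x then {1} else ∅) ∪ (descents (y :: t)).image (· + 1) := by
  ext i
  simp only [descents, Finset.mem_union, Finset.mem_filter, Finset.mem_range,
    Finset.mem_image]
  constructor
  · rintro ⟨hlen, hd⟩
    have h1 : 1 ≤ i := hd.1
    rcases Nat.eq_or_lt_of_le h1 with h | h
    · left
      have : y < x := by
        have := hd.2.2
        simp only [← h] at this
        simpa using this
      simp [this, ← h]
    · right
      refine ⟨i - 1, ⟨?_, ?_⟩, by omega⟩
      · simp at hlen ⊢; omega
      · rw [← descentAt_cons_succ x (y :: t) (i - 1) (by omega)]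
        have : i - 1 + 1 = i := by omega
        rw [this]; exact hd
  · rintro (h | ⟨j, ⟨hj1, hj2⟩, rfl⟩)
    · split_ifs at h with hc
      · simp only [Finset.mem_singleton] at h
        subst h
        refine ⟨by simp, ⟨le_refl 1, by simp, by simpa using hc⟩⟩
      · simp at h
    · refine ⟨by simp at hj1 ⊢; omega, ?_⟩
      rw [descentAt_cons_succ x (y :: t) j hj2.1]
      exact hj2

theorem card_descents : ∀ w : List ℕ, (descents w).card = descCount w
  | [] => by simp [descents, descCount]
  | [x] => by
      have : descents [x] = ∅ := by
        ext i
        simp only [descents, Finset.mem_filter, Finset.mem_range]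
        simp only [DescentAt]
        constructor
        · rintro ⟨h1, h2⟩; simp at h1; omega
        · intro h; simp at h
      simp [this, descCount]
  | x :: y :: t => by
      rw [descents_cons, descCount]
      rw [Finset.card_union_of_disjoint, Finset.card_image_of_injective _ (add_left_injective 1)]
      · rw [card_descents (y :: t)]
        split_ifs <;> simp
      · intro s hs1 hs2
        simp only [Finset.le_eq_subset, Finset.bot_eq_empty] at *
        intro a ha
        have h1 := hs1 ha
        have h2 := hs2 ha
        split_ifs at h1 with hc
        · simp only [Finset.mem_singleton] at h1
          subst h1
          simp only [Finset.mem_image] at h2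
          obtain ⟨j, hj, hj2⟩ := h2
          have : DescentAt (y :: t) j := (Finset.mem_filter.mp hj).2
          have := this.1
          omega
        · simp at h1

def stdz (s : List ℕ) : List ℕ := s.map (fun x => (s.filter (fun z => z ≤ x)).length)

theorem rank_lt_rank {s : List ℕ} {x y : ℕ} (hy : y ∈ s) (hxy : x < y) :
    (s.filter (fun z => z ≤ x)).length < (s.filter (fun z => z ≤ y)).length := by
  have hsub : List.Sublist (s.filter (fun z => z ≤ x)) (s.filter (fun z => z ≤ y)) := by
    apply List.monotone_filter_right
    intro z hz
    simp at hz ⊢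
    omega
  have hle := hsub.length_le
  rcases Nat.eq_or_lt_of_le hle with he | h
  · exfalso
    have := hsub.eq_of_length he
    have hyy : y ∈ s.filter (fun z => z ≤ y) := by
      simp [List.mem_filter, hy]
    rw [← this] at hyy
    simp [List.mem_filter] at hyy
    omega
  · exact h

theorem stdz_spec (s : List ℕ) (hs : s.Nodup) :
    IsPermWord s.length (stdz s) ∧ SameRelOrder s (stdz s) := by
  have hlen : (stdz s).length = s.length := by simp [stdz]
  have hrank_iff : ∀ x ∈ s, ∀ y ∈ s,
      (x < y ↔ (s.filter (fun z => z ≤ x)).length < (s.filter (fun z => z ≤ y)).length) := by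
    intro x hx y hy
    constructor
    · exact fun h => rank_lt_rank hy h
    · intro h
      by_contra hc
      push_neg at hc
      rcases Nat.eq_or_lt_of_le hc with he | hlt
      · subst he; omega
      · have := rank_lt_rank hx hlt; omega
  constructor
  · refine ⟨hlen, ?_, ?_⟩
    · apply List.Nodup.map_on _ hs
      intro x hx y hy hxy
      by_contra hne
      rcases Nat.lt_or_ge x y with h | h
      · have := rank_lt_rank hy h; omega
      · rcases Nat.eq_or_lt_of_le h with he | h
        · exact hne he.symm
        · have := rank_lt_rank hx h; omega
    · intro v hv
      simp only [stdz, List.mem_map] at hv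
      obtain ⟨x, hx, rfl⟩ := hv
      constructor
      · have : x ∈ s.filter (fun z => z ≤ x) := by simp [List.mem_filter, hx]
        exact List.length_pos_iff.mpr (fun he => by simp [he] at this)
      · exact List.length_filter_le _ s
  · refine ⟨hlen.symm, ?_⟩
    intro p q hp hq
    have hp' : p < (stdz s).length := by omega
    have hq' : q < (stdz s).length := by omega
    rw [List.getD_eq_getElem _ _ hp, List.getD_eq_getElem _ _ hq,
      List.getD_eq_getElem _ _ hp', List.getD_eq_getElem _ _ hq']
    simp only [stdz, List.getElem_map]
    exact hrank_iff _ (List.getElem_mem _) _ (List.getElem_mem _)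

theorem sameRelOrder_descents {s σ : List ℕ} (h : SameRelOrder s σ) :
    descents s = descents σ := by
  ext i
  simp only [descents, Finset.mem_filter, Finset.mem_range]
  simp only [DescentAt, ← h.1]
  constructor
  · rintro ⟨h1, h2, h3, h4⟩
    exact ⟨h1, h2, h3, (h.2 i (i-1) (by omega) (by omega)).mp h4⟩
  · rintro ⟨h1, h2, h3, h4⟩
    exact ⟨h1, h2, h3, (h.2 i (i-1) (by omega) (by omega)).mpr h4⟩

theorem not_min_sub {d : ℕ} {w s : List ℕ} (hmin : MinimalPerm d w) (hnd : w.Nodup)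
    (hsub : s.Sublist w) (hlt : s.length < w.length) (h : descCount s = d) : False := by
  have hnds : s.Nodup := hsub.nodup hnd
  obtain ⟨hperm, hrel⟩ := stdz_spec s hnds
  refine hmin.2 s.length (stdz s) hperm hlt ?_ ⟨s, hsub, hrel⟩
  rw [← sameRelOrder_descents hrel, card_descents]
  exact h

theorem descCount_append_last : ∀ (u : List ℕ) (g b : ℕ), u.getLast? = some g → g < b →
    descCount (u ++ [b]) = descCount u
  | [], _, _, h, _ => by simp at h
  | [a], g, b, h, hgb => by
      simp at h
      subst h
      simp [descCount]
      omega
  | a :: a' :: u'', g, b, h, hgb => by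
      rw [List.getLast?_cons_cons] at h
      show descCount (a :: a' :: (u'' ++ [b])) = descCount (a :: a' :: u'')
      show (if a' < a then 1 else 0) + descCount (a' :: (u'' ++ [b])) =
        (if a' < a then 1 else 0) + descCount (a' :: u'')
      rw [show a' :: (u'' ++ [b]) = (a' :: u'') ++ [b] by rfl]
      rw [descCount_append_last (a' :: u'') g b h hgb]

theorem descCount_mid : ∀ (u : List ℕ) (g b y : ℕ) (t : List ℕ), u.getLast? = some g →
    g < b → b < y → descCount (u ++ b :: y :: t) = descCount (u ++ y :: t)
  | [], _, _, _, _, h, _, _ => by simp at h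
  | [a], g, b, y, t, h, hgb, hby => by
      simp at h
      subst h
      show (if b < a then 1 else 0) + descCount (b :: y :: t) =
        (if y < a then 1 else 0) + descCount (y :: t)
      show (if b < a then 1 else 0) + ((if y < b then 1 else 0) + descCount (y :: t)) =
        (if y < a then 1 else 0) + descCount (y :: t)
      have h1 : ¬ b < a := by omega
      have h2 : ¬ y < b := by omega
      have h3 : ¬ y < a := by omega
      simp [h1, h2, h3]
  | a :: a' :: u'', g, b, y, t, h, hgb, hby => by
      rw [List.getLast?_cons_cons] at h
      show descCount (a :: a' :: (u'' ++ b :: y :: t)) = descCount (a :: a' :: (u'' ++ y :: t))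
      show (if a' < a then 1 else 0) + descCount (a' :: (u'' ++ b :: y :: t)) =
        (if a' < a then 1 else 0) + descCount (a' :: (u'' ++ y :: t))
      rw [show a' :: (u'' ++ b :: y :: t) = (a' :: u'') ++ b :: y :: t by rfl,
        show a' :: (u'' ++ y :: t) = (a' :: u'') ++ y :: t by rfl]
      rw [descCount_mid (a' :: u'') g b y t h hgb hby]

theorem descCount_eq {d : ℕ} {w : List ℕ} (hmin : MinimalPerm d w) : descCount w = d := by
  rw [← card_descents]; exact hmin.1

theorem no_ascent_one {d : ℕ} {w : List ℕ} (hmin : MinimalPerm d w) (hnd : w.Nodup) :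
    ¬ AscentAt w 1 := by
  rintro ⟨-, hlen, hlt⟩
  obtain ⟨x, y, t, rfl⟩ : ∃ x y t, w = x :: y :: t := by
    match w, hlen with
    | x :: y :: t, _ => exact ⟨x, y, t, rfl⟩
  simp only [List.getD_cons_zero, List.getD_cons_succ, Nat.sub_self] at hlt
  refine not_min_sub hmin hnd (List.tail_sublist _) (by simp) ?_
  have h1 : descCount (x :: y :: t) = (if y < x then 1 else 0) + descCount (y :: t) := rfl
  have h2 : ¬ y < x := by omega
  have := descCount_eq hmin
  simp only [h1, h2, if_false] at this
  simpa using this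

theorem no_ascent_last {d : ℕ} {w : List ℕ} (hmin : MinimalPerm d w) (hnd : w.Nodup) :
    ¬ AscentAt w (w.length - 1) := by
  rintro ⟨h1, h2, hlt⟩
  have hlen2 : 2 ≤ w.length := by omega
  have hw : w ≠ [] := by intro h; rw [h] at hlen2; simp at hlen2
  set L := w.length - 1 with hL
  set u := w.dropLast with hu
  have hulen : u.length = L := by simp [hu, hL]
  have hune : u ≠ [] := by
    intro h; rw [h] at hulen; simp at hulen; omega
  have hwu : u ++ [w.getLast hw] = w := List.dropLast_append_getLast hw
  have hgu : u.getLast? = some (w.getD (L - 1) 0) := by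
    rw [List.getLast?_eq_getLast hune]
    congr 1
    rw [List.getLast_eq_getElem, List.getElem_dropLast,
      List.getD_eq_getElem _ _ (by omega : L - 1 < w.length)]
    congr 1
    omega
  have hlast : w.getLast hw = w.getD L 0 := by
    rw [List.getLast_eq_getElem, List.getD_eq_getElem _ _ (by omega : L < w.length)]
  refine not_min_sub hmin hnd (List.dropLast_sublist w) (by rw [List.length_dropLast]; omega) ?_
  have := descCount_append_last u (w.getD (L - 1) 0) (w.getLast hw) hgu (by rw [hlast]; exact hlt)
  rw [hwu] at this
  rw [← this]
  exact descCount_eq hmin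

theorem no_double_ascent {d : ℕ} {w : List ℕ} {j : ℕ} (hmin : MinimalPerm d w) (hnd : w.Nodup)
    (ha1 : AscentAt w j) (ha2 : AscentAt w (j + 1)) : False := by
  obtain ⟨hj1, hj2, hlt1⟩ := ha1
  obtain ⟨-, hj3, hlt2⟩ := ha2
  have hlt2' : w.getD j 0 < w.getD (j + 1) 0 := by
    have : j + 1 - 1 = j := rfl
    rwa [this] at hlt2
  have hd1 : w.drop j = w.getD j 0 :: w.drop (j + 1) := by
    rw [List.getD_eq_getElem _ _ (by omega : j < w.length)]
    exact List.drop_eq_getElem_cons (by omega)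
  have hd2 : w.drop (j + 1) = w.getD (j + 1) 0 :: w.drop (j + 2) := by
    rw [List.getD_eq_getElem _ _ (by omega : j + 1 < w.length)]
    exact List.drop_eq_getElem_cons (by omega)
  have hw : w.take j ++ w.getD j 0 :: w.getD (j + 1) 0 :: w.drop (j + 2) = w := by
    rw [← hd2, ← hd1, List.take_append_drop]
  have hulen : (w.take j).length = j := by rw [List.length_take]; omega
  have hune : w.take j ≠ [] := by
    intro h; rw [h] at hulen; simp at hulen; omega
  have hgu : (w.take j).getLast? = some (w.getD (j - 1) 0) := by
    rw [List.getLast?_eq_getLast hune]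
    congr 1
    rw [List.getLast_eq_getElem, List.getD_eq_getElem _ _ (by omega : j - 1 < w.length)]
    rw [List.getElem_take]
    congr 1
    omega
  refine not_min_sub hmin hnd
    (s := w.take j ++ w.getD (j + 1) 0 :: w.drop (j + 2)) ?_ ?_ ?_
  · have h1 : List.Sublist (w.getD (j + 1) 0 :: w.drop (j + 2))
        (w.getD j 0 :: w.getD (j + 1) 0 :: w.drop (j + 2)) :=
      List.sublist_cons_self _ _
    have h2 := h1.append_left (w.take j)
    rwa [hw] at h2
  · rw [List.length_append, hulen, List.length_cons, List.length_drop]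
    omega
  · have hmid := descCount_mid (w.take j) (w.getD (j - 1) 0) (w.getD j 0)
      (w.getD (j + 1) 0) (w.drop (j + 2)) hgu hlt1 hlt2'
    rw [hw] at hmid
    rw [← hmid]
    exact descCount_eq hmin

theorem asc_iff_not_desc {w : List ℕ} (hnd : w.Nodup) {m : ℕ} (h1 : 1 ≤ m)
    (h2 : m + 1 ≤ w.length) : AscentAt w m ↔ ¬ DescentAt w m := by
  have hne : w.getD (m - 1) 0 ≠ w.getD m 0 := by
    rw [List.getD_eq_getElem _ _ (by omega : m - 1 < w.length),
      List.getD_eq_getElem _ _ (by omega : m < w.length)]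
    intro he
    have := (hnd.getElem_inj_iff).mp he
    omega
  unfold AscentAt DescentAt
  constructor
  · rintro ⟨-, -, h⟩ ⟨-, -, h'⟩; omega
  · intro h
    refine ⟨h1, h2, ?_⟩
    by_contra hc
    exact h ⟨h1, h2, by omega⟩

theorem structure_lemma {n : ℕ} (hn : 1 ≤ n) {w : List ℕ}
    (hperm : IsPermWord (2 * n + 1) w) (hmin : MinimalPerm (n + 1) w) :
    ∃ i, 1 ≤ i ∧ i ≤ n ∧
      ∀ m, 1 ≤ m → m ≤ 2 * n →
        (AscentAt w m ↔
          ((∃ k, 1 ≤ k ∧ k ≤ i - 1 ∧ m = 2 * k) ∨ (∃ k, i ≤ k ∧ k ≤ n - 1 ∧ m = 2 * k + 1))) := by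
  obtain ⟨hlen, hnd, hbnd⟩ := hperm
  set A : Finset ℕ := (Finset.Icc 1 (2 * n)).filter (fun m => AscentAt w m) with hA
  have hmemA : ∀ m, m ∈ A ↔ (1 ≤ m ∧ m ≤ 2 * n ∧ AscentAt w m) := by
    intro m
    simp only [hA, Finset.mem_filter, Finset.mem_Icc]
    tauto
  have hDfilter : descents w = (Finset.Icc 1 (2 * n)).filter (fun m => DescentAt w m) := by
    ext m
    simp only [descents, Finset.mem_filter, Finset.mem_range, Finset.mem_Icc, hlen]
    constructor
    · rintro ⟨h1, h2⟩
      exact ⟨⟨h2.1, by have := h2.2.1; omega⟩, h2⟩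
    · rintro ⟨h1, h2⟩
      exact ⟨by omega, h2⟩
  have hsplit := Finset.card_filter_add_card_filter_not
    (s := Finset.Icc 1 (2 * n)) (p := fun m => DescentAt w m)
  have hfneg : (Finset.Icc 1 (2 * n)).filter (fun m => ¬ DescentAt w m) = A := by
    rw [hA]
    apply Finset.filter_congr
    intro m hm
    simp only [Finset.mem_Icc] at hm
    exact (asc_iff_not_desc hnd hm.1 (by omega)).symm
  have hAcard : A.card = n - 1 := by
    rw [hfneg] at hsplit
    rw [← hDfilter] at hsplit
    rw [hmin.1] at hsplit
    rw [Nat.card_Icc] at hsplit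
    omega
  have na1 : ¬ AscentAt w 1 := no_ascent_one hmin hnd
  have nalast : ¬ AscentAt w (2 * n) := by
    have := no_ascent_last hmin hnd
    rwa [hlen, show 2 * n + 1 - 1 = 2 * n from rfl] at this
  have ndouble : ∀ j, AscentAt w j → AscentAt w (j + 1) → False :=
    fun j h1 h2 => no_double_ascent hmin hnd h1 h2
  have hA2 : ∀ m ∈ A, 2 ≤ m ∧ m ≤ 2 * n - 1 := by
    intro m hm
    rw [hmemA] at hm
    obtain ⟨h1, h2, h3⟩ := hm
    constructor
    · rcases Nat.eq_or_lt_of_le h1 with he | h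
      · exact absurd (he ▸ h3) na1
      · omega
    · rcases Nat.eq_or_lt_of_le h2 with he | h
      · exact absurd (he ▸ h3) nalast
      · omega
  have himg : A.image (· / 2) = Finset.Icc 1 (n - 1) := by
    apply Finset.eq_of_subset_of_card_le
    · intro k hk
      simp only [Finset.mem_image] at hk
      obtain ⟨m, hm, rfl⟩ := hk
      have := hA2 m hm
      simp only [Finset.mem_Icc]
      omega
    · rw [Finset.card_image_of_injOn, hAcard, Nat.card_Icc]
      · omega
      · intro m hm m' hm' he
        by_contra hne
        have he2 : m / 2 = m' / 2 := he
        have h2 := hA2 m hm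
        have h2' := hA2 m' hm'
        have hasc := ((hmemA m).mp hm).2.2
        have hasc' := ((hmemA m').mp hm').2.2
        rcases (by omega : m' = m + 1 ∨ m = m' + 1) with h | h
        · exact ndouble m hasc (h ▸ hasc')
        · exact ndouble m' hasc' (h ▸ hasc)
  have pair : ∀ k, 1 ≤ k → k ≤ n - 1 → (2 * k ∈ A ∨ 2 * k + 1 ∈ A) := by
    intro k h1 h2
    have : k ∈ A.image (· / 2) := by
      rw [himg]; simp only [Finset.mem_Icc]; omega
    simp only [Finset.mem_image] at this
    obtain ⟨m, hm, he⟩ := this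
    have := hA2 m hm
    rcases (by omega : m = 2 * k ∨ m = 2 * k + 1) with h | h
    · left; exact h ▸ hm
    · right; exact h ▸ hm
  have notboth : ∀ k, 2 * k ∈ A → 2 * k + 1 ∈ A → False := by
    intro k h1 h2
    exact ndouble (2 * k) ((hmemA _).mp h1).2.2 ((hmemA _).mp h2).2.2
  set K : Finset ℕ := (Finset.Icc 1 n).filter (fun k => 2 * k ∉ A) with hK
  have hKne : K.Nonempty := by
    refine ⟨n, ?_⟩
    simp only [hK, Finset.mem_filter, Finset.mem_Icc]
    refine ⟨⟨hn, le_refl n⟩, fun hc => nalast ((hmemA _).mp hc).2.2⟩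
  set i := K.min' hKne with hi
  have hiK : i ∈ K := K.min'_mem hKne
  have hi1 : 1 ≤ i ∧ i ≤ n ∧ 2 * i ∉ A := by
    have := hiK
    simp only [hK, Finset.mem_filter, Finset.mem_Icc] at this
    exact ⟨this.1.1, this.1.2, this.2⟩
  have hlow : ∀ k, 1 ≤ k → k < i → 2 * k ∈ A := by
    intro k h1 h2
    by_contra hc
    have : k ∈ K := by
      simp only [hK, Finset.mem_filter, Finset.mem_Icc]
      exact ⟨⟨h1, by omega⟩, hc⟩
    have := K.min'_le k this
    omega
  have hhigh : ∀ k, i ≤ k → k ≤ n - 1 → (2 * k + 1 ∈ A ∧ 2 * (k + 1) ∉ A) := by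
    intro k hk
    induction k, hk using Nat.le_induction with
    | base =>
        intro hle
        have h1 : 2 * i + 1 ∈ A := by
          rcases pair i hi1.1 hle with h | h
          · exact absurd h hi1.2.2
          · exact h
        refine ⟨h1, fun hc => ?_⟩
        have hc' := ((hmemA _).mp hc).2.2
        rw [show 2 * (i + 1) = 2 * i + 1 + 1 by omega] at hc'
        exact ndouble (2 * i + 1) ((hmemA _).mp h1).2.2 hc'
    | succ k hik ih =>
        intro hle
        have ihh := ih (by omega)
        have h1 : 2 * (k + 1) + 1 ∈ A := by
          rcases pair (k + 1) (by omega) hle with h | h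
          · exact absurd h ihh.2
          · exact h
        refine ⟨h1, fun hc => ?_⟩
        have hc' := ((hmemA _).mp hc).2.2
        rw [show 2 * (k + 1 + 1) = 2 * (k + 1) + 1 + 1 by omega] at hc'
        exact ndouble (2 * (k + 1) + 1) ((hmemA _).mp h1).2.2 hc'
  have heven : ∀ k, i ≤ k → k ≤ n → 2 * k ∉ A := by
    intro k h1 h2
    rcases Nat.eq_or_lt_of_le h1 with he | h
    · exact he ▸ hi1.2.2
    · have := (hhigh (k - 1) (by omega) (by omega)).2
      rwa [show 2 * (k - 1 + 1) = 2 * k by omega] at this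
  refine ⟨i, hi1.1, hi1.2.1, ?_⟩
  intro m hm1 hm2
  constructor
  · intro hasc
    have hmA : m ∈ A := (hmemA m).mpr ⟨hm1, hm2, hasc⟩
    have hb := hA2 m hmA
    rcases (by omega : m = 2 * (m / 2) ∨ m = 2 * (m / 2) + 1) with h | h
    · left
      refine ⟨m / 2, by omega, ?_, h⟩
      by_contra hc
      exact heven (m / 2) (by omega) (by omega) (h ▸ hmA)
    · right
      refine ⟨m / 2, ?_, by omega, h⟩
      by_contra hc
      exact notboth (m / 2) (hlow (m / 2) (by omega) (by omega)) (h ▸ hmA)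
  · rintro (⟨k, hk1, hk2, rfl⟩ | ⟨k, hk1, hk2, rfl⟩)
    · exact ((hmemA _).mp (hlow k hk1 (by omega))).2.2
    · exact ((hmemA _).mp (hhigh k hk1 hk2).1).2.2

def PS (a : List ℕ) (m : ℕ) : Prop := ∃ j, 1 ≤ j ∧ j < a.length ∧ m = (a.take j).sum

theorem sum_take_pos {l : List ℕ} (hl : ∀ x ∈ l, 1 ≤ x) {k : ℕ} (hk : 1 ≤ k) (hne : l ≠ []) :
    1 ≤ (l.take k).sum := by
  obtain ⟨x, t, rfl⟩ : ∃ x t, l = x :: t := by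
    match l, hne with
    | x :: t, _ => exact ⟨x, t, rfl⟩
  obtain ⟨k', rfl⟩ : ∃ k', k = k' + 1 := ⟨k - 1, by omega⟩
  rw [List.take_succ_cons, List.sum_cons]
  have := hl x (by simp)
  omega

theorem sum_take_cons (c : ℕ) (a' : List ℕ) {j : ℕ} (hj : 1 ≤ j) :
    ((c :: a').take j).sum = c + (a'.take (j - 1)).sum := by
  obtain ⟨j', rfl⟩ : ∃ j', j = j' + 1 := ⟨j - 1, by omega⟩
  rw [List.take_succ_cons, List.sum_cons]
  simp

theorem PS_cons {c : ℕ} {a' : List ℕ} {m : ℕ} (hc : 1 ≤ c) (ha : ∀ x ∈ a', 1 ≤ x) :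
    PS (c :: a') m ↔ (a' ≠ [] ∧ m = c) ∨ (c < m ∧ PS a' (m - c)) := by
  constructor
  · rintro ⟨j, hj1, hj2, rfl⟩
    rcases Nat.eq_or_lt_of_le hj1 with he | h
    · left
      constructor
      · intro hne
        subst hne
        simp at hj2
        omega
      · rw [sum_take_cons c a' hj1, ← he]
        simp
    · right
      have hane : a' ≠ [] := by
        intro hne; subst hne; simp at hj2; omega
      rw [sum_take_cons c a' hj1]
      have hpos : 1 ≤ (a'.take (j - 1)).sum := sum_take_pos ha (by omega) hane
      constructor
      · omega
      · exact ⟨j - 1, by omega, by simp at hj2 ⊢; omega, by omega⟩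
  · rintro (⟨hne, rfl⟩ | ⟨hlt, j, hj1, hj2, hj3⟩)
    · refine ⟨1, le_refl 1, ?_, ?_⟩
      · simp
        exact List.length_pos_iff.mpr hne
      · simp
    · refine ⟨j + 1, by omega, by simp; omega, ?_⟩
      rw [sum_take_cons c a' (by omega : 1 ≤ j + 1)]
      simp only [Nat.add_sub_cancel]
      omega

theorem ascentAt_append {u v : List ℕ} {m : ℕ} (h : u.length + 1 ≤ m) :
    AscentAt (u ++ v) m ↔ AscentAt v (m - u.length) := by
  unfold AscentAt
  rw [List.getD_append_right u v 0 m (by omega),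
    List.getD_append_right u v 0 (m - 1) (by omega)]
  rw [show m - 1 - u.length = m - u.length - 1 by omega]
  rw [List.length_append]
  constructor
  · rintro ⟨h1, h2, h3⟩; exact ⟨by omega, by omega, h3⟩
  · rintro ⟨h1, h2, h3⟩; exact ⟨by omega, by omega, h3⟩

theorem descentAt_append {u v : List ℕ} {m : ℕ} (h : u.length + 1 ≤ m) :
    DescentAt (u ++ v) m ↔ DescentAt v (m - u.length) := by
  unfold DescentAt
  rw [List.getD_append_right u v 0 m (by omega),
    List.getD_append_right u v 0 (m - 1) (by omega)]
  rw [show m - 1 - u.length = m - u.length - 1 by omega]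
  rw [List.length_append]
  constructor
  · rintro ⟨h1, h2, h3⟩; exact ⟨by omega, by omega, h3⟩
  · rintro ⟨h1, h2, h3⟩; exact ⟨by omega, by omega, h3⟩

theorem take_getLast? {w : List ℕ} {c : ℕ} (h1 : 1 ≤ c) (h2 : c ≤ w.length) :
    (w.take c).getLast? = some (w.getD (c - 1) 0) := by
  have htl : (w.take c).length = c := by rw [List.length_take]; omega
  have hne : w.take c ≠ [] := by
    intro h; rw [h] at htl; simp at htl; omega
  rw [List.getLast?_eq_getLast hne]
  congr 1
  rw [List.getLast_eq_getElem, List.getElem_take, List.getD_eq_getElem _ _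
    (by omega : c - 1 < w.length)]
  congr 1
  omega

theorem head?_flatten_getD {y : List ℕ} (l : List (List ℕ)) (hy : y ≠ []) :
    ((y :: l).flatten).getD 0 0 = y.getD 0 0 := by
  obtain ⟨z, ys, rfl⟩ : ∃ z ys, y = z :: ys := by
    match y, hy with
    | z :: ys, _ => exact ⟨z, ys, rfl⟩
  simp

theorem build_has (a : List ℕ) : ∀ (w : List ℕ), (∀ x ∈ a, 1 ≤ x) → w.length = a.sum →
    a ≠ [] →
    (∀ m, 1 ≤ m → m < w.length → (PS a m → AscentAt w m) ∧ (¬ PS a m → DescentAt w m)) →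
    HasAscentSeq w a := by
  induction a with
  | nil => intro w _ _ hne _; exact absurd rfl hne
  | cons c a' ih =>
    intro w hpos hlen _ hcond
    have hc : 1 ≤ c := hpos c (by simp)
    have hcw : c ≤ w.length := by rw [hlen, List.sum_cons]; omega
    have htake_len : (w.take c).length = c := by rw [List.length_take]; omega
    have htne : w.take c ≠ [] := by
      intro h; rw [h] at htake_len; simp at htake_len; omega
    have hchainb : List.Chain' (fun x y => x > y) (w.take c) := by
      rw [show @List.Chain' ℕ = List.IsChain from rfl, List.isChain_iff_getElem]
      intro p hp
      rw [htake_len] at hp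
      have hdesc : DescentAt w (p + 1) := by
        apply (hcond (p + 1) (by omega) (by omega)).2
        rintro ⟨j, hj1, hj2, hj3⟩
        have : c ≤ ((c :: a').take j).sum := by
          rw [sum_take_cons c a' hj1]; omega
        omega
      obtain ⟨-, -, hlt⟩ := hdesc
      rw [show p + 1 - 1 = p from rfl] at hlt
      rw [List.getD_eq_getElem _ _ (by omega : p + 1 < w.length),
        List.getD_eq_getElem _ _ (by omega : p < w.length)] at hlt
      simp only [List.get_eq_getElem, List.getElem_take]
      exact hlt
    by_cases ha' : a' = []
    · subst ha'
      have hwc : w.length = c := by rw [hlen]; simp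
      have hwtake : w.take c = w := by
        rw [show c = w.length by omega]
        exact List.take_length
      refine ⟨[w], by simp, by simp [hwc], ?_, List.isChain_singleton _⟩
      intro b hb
      simp at hb
      subst hb
      rw [← hwtake]
      exact ⟨htne, hchainb⟩
    · have ha'pos : 1 ≤ a'.sum := by
        obtain ⟨x, t, rfl⟩ : ∃ x t, a' = x :: t := by
          match a', ha' with
          | x :: t, _ => exact ⟨x, t, rfl⟩
        have := hpos x (by simp)
        simp
        omega
      have heq : w.take c ++ w.drop c = w := List.take_append_drop c w
      have hrestlen : (w.drop c).length = a'.sum := by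
        rw [List.length_drop, hlen, List.sum_cons]; omega
      have hcond' : ∀ m, 1 ≤ m → m < (w.drop c).length →
          (PS a' m → AscentAt (w.drop c) m) ∧ (¬ PS a' m → DescentAt (w.drop c) m) := by
        intro m h1 h2
        have hmc : m + c < w.length := by
          rw [hrestlen] at h2
          rw [hlen, List.sum_cons]
          omega
        have hshiftA : AscentAt (w.drop c) m ↔ AscentAt w (m + c) := by
          have h := ascentAt_append (u := w.take c) (v := w.drop c) (m := m + c)
            (by rw [htake_len]; omega)
          rw [heq, htake_len, show m + c - c = m by omega] at h
          exact h.symm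
        have hshiftD : DescentAt (w.drop c) m ↔ DescentAt w (m + c) := by
          have h := descentAt_append (u := w.take c) (v := w.drop c) (m := m + c)
            (by rw [htake_len]; omega)
          rw [heq, htake_len, show m + c - c = m by omega] at h
          exact h.symm
        have hPSiff : PS (c :: a') (m + c) ↔ PS a' m := by
          rw [PS_cons hc (fun x hx => hpos x (by simp [hx]))]
          constructor
          · rintro (⟨-, he⟩ | ⟨-, h⟩)
            · omega
            · rwa [show m + c - c = m by omega] at h
          · intro h
            right
            exact ⟨by omega, by rwa [show m + c - c = m by omega]⟩
        constructor
        · intro hps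
          rw [hshiftA]
          exact (hcond (m + c) (by omega) hmc).1 (hPSiff.mpr hps)
        · intro hps
          rw [hshiftD]
          exact (hcond (m + c) (by omega) hmc).2 (fun h => hps (hPSiff.mp h))
      obtain ⟨bs', h1, h2, h3, h4⟩ := ih (w.drop c) (fun x hx => hpos x (by simp [hx]))
        hrestlen ha' hcond'
      refine ⟨w.take c :: bs', ?_, ?_, ?_, ?_⟩
      · rw [List.flatten_cons, h1, heq]
      · rw [List.map_cons, h2, htake_len]
      · intro b hb
        rcases List.mem_cons.mp hb with hb | hb
        · subst hb; exact ⟨htne, hchainb⟩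
        · exact h3 b hb
      · rw [show @List.Chain' (List ℕ) = List.IsChain from rfl, List.isChain_cons]
        refine ⟨?_, h4⟩
        intro y hy
        have hbs' : bs' = y :: bs'.tail := by
          cases bs' with
          | nil => simp at hy
          | cons z tl => simp at hy; subst hy; rfl
        have hyne : y ≠ [] := (h3 y (by rw [hbs']; simp)).1
        have hasc : AscentAt w c := by
          apply (hcond c hc (by rw [hlen, List.sum_cons]; omega)).1
          exact ⟨1, le_refl 1, by simp [List.length_pos_iff.mpr ha'], by simp⟩
        obtain ⟨-, -, hlt⟩ := hasc
        refine ⟨w.getD (c - 1) 0, ?_, y.getD 0 0, ?_, ?_⟩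
        · rw [take_getLast? hc hcw]; simp
        · obtain ⟨z, ys, rfl⟩ : ∃ z ys, y = z :: ys := by
            match y, hyne with
            | z :: ys, _ => exact ⟨z, ys, rfl⟩
          simp
        · have hgd : w.getD c 0 = y.getD 0 0 := by
            conv_lhs => rw [← heq]
            rw [List.getD_append_right _ _ _ _ (by rw [htake_len] : (w.take c).length ≤ c),
              htake_len, Nat.sub_self, ← h1, hbs']
            exact head?_flatten_getD _ hyne
          rw [← hgd]
          exact hlt

theorem extract_has : ∀ (bs : List (List ℕ)) (w a : List ℕ), bs.flatten = w →
    bs.map List.length = a →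
    (∀ b ∈ bs, b ≠ [] ∧ List.Chain' (fun x y => x > y) b) →
    List.Chain' (fun b c => ∃ x ∈ b.getLast?, ∃ y ∈ c.head?, x < y) bs →
    (∀ x ∈ a, 1 ≤ x) ∧ w.length = a.sum ∧
      ∀ m, 1 ≤ m → m < w.length → (PS a m → AscentAt w m) ∧ (¬ PS a m → DescentAt w m)
  | [], w, a, hf, hm, _, _ => by
      subst hf; subst hm
      refine ⟨by simp, by simp, ?_⟩
      intro m h1 h2
      exact absurd h2 (by simp)
  | b :: bs', w, a, hf, hm, hblocks, hchain => by
      obtain ⟨hbne, hbchain⟩ := hblocks b (by simp)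
      obtain ⟨ha'pos, hrestlen, hcondr⟩ := extract_has bs' bs'.flatten (bs'.map List.length)
        rfl rfl (fun b hb => hblocks b (by simp [hb])) hchain.tail
      have hw : b ++ bs'.flatten = w := by rw [← hf]; simp
      have ha : b.length :: List.map List.length bs' = a := by rw [← hm]; simp
      subst hw; subst ha
      have hbl : 1 ≤ b.length := List.length_pos_iff.mpr hbne
      refine ⟨?_, ?_, ?_⟩
      · intro x hx
        rcases List.mem_cons.mp hx with hx | hx
        · omega
        · exact ha'pos x hx
      · simp [hrestlen]
      · intro m h1 h2
        rw [List.length_append] at h2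
        rcases (by omega : m < b.length ∨ m = b.length ∨ b.length < m) with hm | hm | hm
        · have hnps : ¬ PS (b.length :: List.map List.length bs') m := by
            rintro ⟨j, hj1, hj2, hj3⟩
            rw [sum_take_cons _ _ hj1] at hj3
            omega
          refine ⟨fun hps => absurd hps hnps, fun _ => ?_⟩
          obtain ⟨m', rfl⟩ : ∃ m', m = m' + 1 := ⟨m - 1, by omega⟩
          have hgt : b.getD (m' + 1) 0 < b.getD (m' + 1 - 1) 0 := by
            have := List.isChain_iff_getElem.mp hbchain m' (by omega)
            rw [show m' + 1 - 1 = m' from rfl]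
            rw [List.getD_eq_getElem _ _ (by omega : m' + 1 < b.length),
              List.getD_eq_getElem _ _ (by omega : m' < b.length)]
            simpa [List.get_eq_getElem] using this
          refine ⟨h1, by rw [List.length_append]; omega, ?_⟩
          rw [List.getD_append _ _ _ _ (by omega : m' + 1 < b.length),
            List.getD_append _ _ _ _ (by omega : m' + 1 - 1 < b.length)]
          exact hgt
        · subst hm
          have hrestne : bs'.flatten ≠ [] := by
            intro h
            rw [h] at h2
            simp at h2
          have hbs'ne : bs' ≠ [] := by
            intro h; rw [h] at hrestne; simp at hrestne
          have hps : PS (b.length :: List.map List.length bs') b.length := by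
            refine ⟨1, le_refl 1, ?_, by simp⟩
            simp
            exact List.length_pos_iff.mpr hbs'ne
          refine ⟨fun _ => ?_, fun hn => absurd hps hn⟩
          obtain ⟨c₁, tl, rfl⟩ : ∃ c₁ tl, bs' = c₁ :: tl := by
            match bs', hbs'ne with
            | c₁ :: tl, _ => exact ⟨c₁, tl, rfl⟩
          have hc₁ne : c₁ ≠ [] := (hblocks c₁ (by simp)).1
          obtain ⟨x, hx, y, hy, hxy⟩ := (List.isChain_cons_cons.mp hchain).1
          have hxe : x = b.getD (b.length - 1) 0 := by
            have := take_getLast? (w := b) hbl (le_refl b.length)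
            rw [List.take_length] at this
            rw [this] at hx
            exact (by simpa using hx : _ = x).symm
          have hye : y = c₁.getD 0 0 := by
            obtain ⟨z, ys, rfl⟩ : ∃ z ys, c₁ = z :: ys := by
              match c₁, hc₁ne with
              | z :: ys, _ => exact ⟨z, ys, rfl⟩
            exact (by simpa using hy : _ = y).symm
          refine ⟨hbl, by rw [List.length_append]; omega, ?_⟩
          rw [List.getD_append _ _ _ _ (by omega : b.length - 1 < b.length),
            List.getD_append_right _ _ _ _ (le_refl b.length), Nat.sub_self,
            head?_flatten_getD tl hc₁ne]
          rw [hxe, hye] at hxy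
          exact hxy
        · have hPSiff : PS (b.length :: List.map List.length bs') m ↔
              PS (List.map List.length bs') (m - b.length) := by
            rw [PS_cons hbl ha'pos]
            constructor
            · rintro (⟨-, he⟩ | ⟨-, h⟩)
              · omega
              · exact h
            · intro h
              right
              exact ⟨hm, h⟩
          have hsA := ascentAt_append (u := b) (v := bs'.flatten) (m := m) (by omega)
          have hsD := descentAt_append (u := b) (v := bs'.flatten) (m := m) (by omega)
          have hcc := hcondr (m - b.length) (by omega) (by omega)
          constructor
          · intro hps
            rw [hsA]
            exact hcc.1 (hPSiff.mp hps)
          · intro hps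
            rw [hsD]
            exact hcc.2 (fun h => hps (hPSiff.mpr h))

theorem aseq_take_sum {n i : ℕ} (hi1 : 1 ≤ i) (hi2 : i ≤ n) {j : ℕ} (hj1 : 1 ≤ j) (hj2 : j ≤ n) :
    ((List.replicate (i - 1) 2 ++ 3 :: List.replicate (n - i) 2).take j).sum
      = if j ≤ i - 1 then 2 * j else 2 * j + 1 := by
  by_cases h : j ≤ i - 1
  · rw [if_pos h, List.take_append_of_le_length (by simp; omega), List.take_replicate]
    simp [List.sum_replicate, smul_eq_mul]
    omega
  · rw [if_neg h, List.take_append,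
      List.take_of_length_le (by simp; omega),
      show j - (List.replicate (i - 1) 2).length = (j - i) + 1 by simp; omega,
      List.take_succ_cons, List.take_replicate]
    simp [List.sum_replicate, smul_eq_mul]
    omega

theorem aseq_len {n i : ℕ} :
    (List.replicate (i - 1) 2 ++ 3 :: List.replicate (n - i) 2).length = (i - 1) + (n - i) + 1 := by
  simp
  omega

theorem aseq_sum {n i : ℕ} (hi1 : 1 ≤ i) (hi2 : i ≤ n) :
    (List.replicate (i - 1) 2 ++ 3 :: List.replicate (n - i) 2).sum = 2 * n + 1 := by
  simp [List.sum_replicate, smul_eq_mul]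
  omega

theorem aseq_pos {n i : ℕ} : ∀ x ∈ List.replicate (i - 1) 2 ++ 3 :: List.replicate (n - i) 2,
    1 ≤ x := by
  intro x hx
  simp [List.mem_append, List.mem_replicate] at hx
  rcases hx with hx | hx | hx <;> omega

theorem PS_aseq {n i : ℕ} (hn : 1 ≤ n) (hi1 : 1 ≤ i) (hi2 : i ≤ n) (m : ℕ) :
    PS (List.replicate (i - 1) 2 ++ 3 :: List.replicate (n - i) 2) m ↔
      ((m % 2 = 0 ∧ 2 ≤ m ∧ m ≤ 2 * i - 2) ∨ (m % 2 = 1 ∧ 2 * i + 1 ≤ m ∧ m ≤ 2 * n - 1)) := by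
  have hlen : (List.replicate (i - 1) 2 ++ 3 :: List.replicate (n - i) 2).length = n := by
    rw [aseq_len]; omega
  constructor
  · rintro ⟨j, hj1, hj2, rfl⟩
    rw [hlen] at hj2
    rw [aseq_take_sum hi1 hi2 hj1 (by omega)]
    split_ifs with h <;> omega
  · rintro (⟨h1, h2, h3⟩ | ⟨h1, h2, h3⟩)
    · refine ⟨m / 2, by omega, by rw [hlen]; omega, ?_⟩
      rw [aseq_take_sum hi1 hi2 (by omega) (by omega), if_pos (by omega)]
      omega
    · refine ⟨m / 2, by omega, by rw [hlen]; omega, ?_⟩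
      rw [aseq_take_sum hi1 hi2 (by omega) (by omega), if_neg (by omega)]
      omega

theorem P_arith {n i m : ℕ} (hi1 : 1 ≤ i) :
    ((∃ k, 1 ≤ k ∧ k ≤ i - 1 ∧ m = 2 * k) ∨ (∃ k, i ≤ k ∧ k ≤ n - 1 ∧ m = 2 * k + 1)) ↔
      ((m % 2 = 0 ∧ 2 ≤ m ∧ m ≤ 2 * i - 2) ∨ (m % 2 = 1 ∧ 2 * i + 1 ≤ m ∧ m ≤ 2 * n - 1)) := by
  constructor
  · rintro (⟨k, h1, h2, rfl⟩ | ⟨k, h1, h2, rfl⟩)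
    · left; omega
    · right; omega
  · rintro (⟨h1, h2, h3⟩ | ⟨h1, h2, h3⟩)
    · exact Or.inl ⟨m / 2, by omega, by omega, by omega⟩
    · exact Or.inr ⟨m / 2, by omega, by omega, by omega⟩

theorem has_of_struct {n i : ℕ} (hn : 1 ≤ n) (hi1 : 1 ≤ i) (hi2 : i ≤ n) {w : List ℕ}
    (hnd : w.Nodup) (hlen : w.length = 2 * n + 1)
    (hchar : ∀ m, 1 ≤ m → m ≤ 2 * n →
      (AscentAt w m ↔
        ((∃ k, 1 ≤ k ∧ k ≤ i - 1 ∧ m = 2 * k) ∨ (∃ k, i ≤ k ∧ k ≤ n - 1 ∧ m = 2 * k + 1)))) :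
    HasAscentSeq w (List.replicate (i - 1) 2 ++ 3 :: List.replicate (n - i) 2) := by
  apply build_has _ _ aseq_pos (by rw [hlen, aseq_sum hi1 hi2]) (by simp)
  intro m h1 h2
  rw [hlen] at h2
  have hiff : PS (List.replicate (i - 1) 2 ++ 3 :: List.replicate (n - i) 2) m ↔
      AscentAt w m := by
    rw [PS_aseq hn hi1 hi2, ← P_arith hi1, hchar m h1 (by omega)]
  constructor
  · exact hiff.mp
  · intro hps
    have hna : ¬ AscentAt w m := fun h => hps (hiff.mpr h)
    by_contra hd
    exact hna ((asc_iff_not_desc hnd h1 (by omega)).mpr hd)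

theorem mset_facts {n i : ℕ} (hn : 1 ≤ n) (hi1 : 1 ≤ i) (hi2 : i ≤ n) {w : List ℕ}
    (hhas : HasAscentSeq w (List.replicate (i - 1) 2 ++ 3 :: List.replicate (n - i) 2)) :
    DescentAt w (2 * i - 1) ∧ DescentAt w (2 * i) ∧
      ∀ j, DescentAt w j → DescentAt w (j + 1) → j = 2 * i - 1 := by
  obtain ⟨bs, hf, hm, hb, hc⟩ := hhas
  obtain ⟨hpos, hlen, hcond⟩ := extract_has bs w _ hf hm hb hc
  rw [aseq_sum hi1 hi2] at hlen
  have hPS := PS_aseq hn hi1 hi2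
  refine ⟨?_, ?_, ?_⟩
  · refine (hcond (2 * i - 1) (by omega) (by omega)).2 ?_
    rw [hPS]; omega
  · refine (hcond (2 * i) (by omega) (by omega)).2 ?_
    rw [hPS]; omega
  · intro j hd1 hd2
    have hb1 := hd1.1
    have hb2 := hd1.2.1
    have hb3 := hd2.2.1
    rw [hlen] at hb2 hb3
    have hnp1 : ¬ ((j % 2 = 0 ∧ 2 ≤ j ∧ j ≤ 2 * i - 2) ∨
        (j % 2 = 1 ∧ 2 * i + 1 ≤ j ∧ j ≤ 2 * n - 1)) := by
      intro h
      have hasc := (hcond j hb1 (by omega)).1 ((hPS j).mpr h)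
      have g1 := hasc.2.2
      have g2 := hd1.2.2
      omega
    have hnp2 : ¬ (((j + 1) % 2 = 0 ∧ 2 ≤ j + 1 ∧ j + 1 ≤ 2 * i - 2) ∨
        ((j + 1) % 2 = 1 ∧ 2 * i + 1 ≤ j + 1 ∧ j + 1 ≤ 2 * n - 1)) := by
      intro h
      have hasc := (hcond (j + 1) (by omega) (by omega)).1 ((hPS (j + 1)).mpr h)
      have g1 := hasc.2.2
      have g2 := hd2.2.2
      omega
    omega


/-- every minimal permutation of length `2n+1` with `n+1` descents lies in
exactly one of the sets `𝓜_{2n+1,2i}` for `1 ≤ i ≤ n` (so `𝓕_{n+1}(2n+1)` is their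
disjoint union), and membership in `𝓜_{2n+1,2i}` is equivalent to having ascent sequence
`(2,…,2,3,2,…,2)` with the `3` in position `i`. -/
theorem Fset_disjoint_union_Mset (n : ℕ) (hn : 1 ≤ n) :
    (∀ w ∈ minimalPerms (n + 1) (2 * n + 1),
        ∃! i, i ∈ Finset.Icc 1 n ∧ w ∈ Mset n i) ∧
      ∀ i ∈ Finset.Icc 1 n, ∀ w : List ℕ,
        w ∈ Mset n i ↔
          w ∈ minimalPerms (n + 1) (2 * n + 1) ∧
            HasAscentSeq w (List.replicate (i - 1) 2 ++ 3 :: List.replicate (n - i) 2) := by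
  constructor
  · rintro w ⟨hperm, hmin⟩
    obtain ⟨i, hi1, hi2, hchar⟩ := structure_lemma hn hperm hmin
    have hhas := has_of_struct hn hi1 hi2 hperm.2.1 hperm.1 hchar
    obtain ⟨hd1, hd2, huniq⟩ := mset_facts hn hi1 hi2 hhas
    refine ⟨i, ⟨Finset.mem_Icc.mpr ⟨hi1, hi2⟩, ⟨hperm, hmin, hd1, hd2, huniq⟩⟩, ?_⟩
    rintro y ⟨hy, -, -, hd1', hd2', huniq'⟩
    rw [Finset.mem_Icc] at hy
    have := huniq' (2 * i - 1) hd1 (by rwa [show 2 * i - 1 + 1 = 2 * i by omega])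
    omega
  · intro i hi w
    rw [Finset.mem_Icc] at hi
    constructor
    · rintro ⟨hperm, hmin, hd1, hd2, huniq⟩
      refine ⟨⟨hperm, hmin⟩, ?_⟩
      obtain ⟨i', hi1', hi2', hchar⟩ := structure_lemma hn hperm hmin
      have hhas := has_of_struct hn hi1' hi2' hperm.2.1 hperm.1 hchar
      obtain ⟨hd1', hd2', -⟩ := mset_facts hn hi1' hi2' hhas
      have he : 2 * i' - 1 = 2 * i - 1 :=
        huniq (2 * i' - 1) hd1' (by rwa [show 2 * i' - 1 + 1 = 2 * i' by omega])
      have he2 : i' = i := by omega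
      subst he2
      exact hhas
    · rintro ⟨⟨hperm, hmin⟩, hhas⟩
      obtain ⟨hd1, hd2, huniq⟩ := mset_facts hn hi.1 hi.2 hhas
      exact ⟨hperm, hmin, hd1, hd2, huniq⟩
end
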